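/- arXiv:2511.14637 — 6 statements merged into one kernel-verified Lean document; each statement's English description precedes it below -/
import Mathlib

section
/- For the van der Corput sequence in base 2, if 2^k ≤ n < 2^{k+1}, then every gap between consecutive points of the sorted set {0, x_1, ..., x_n} (including the gap from the largest point to 1) has length either 2^{-k} or 2^{-(k+1)}. -/
noncomputable def vdc (m : ℕ) : ℝ :=
  ∑ j ∈ Finset.range m, if m.testBit j then (1 : ℝ) / 2 ^ (j + 1) else 0

lemma vdc_eq_sum (m L : ℕ) (h : m ≤ L) :
    vdc m = ∑ j ∈ Finset.range L, if m.testBit j then (1:ℝ)/2^(j+1) else 0 := by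
  unfold vdc
  refine (Finset.sum_subset (Finset.range_subset_range.2 h) ?_)
  intro j _ hj
  simp only [Finset.mem_range, not_lt] at hj
  have : m < 2 ^ j := lt_of_lt_of_le (Nat.lt_two_pow_self (n := m)) (Nat.pow_le_pow_right (by norm_num) hj)
  simp [Nat.testBit_eq_false_of_lt this]

lemma vdc_rec (m : ℕ) :
    vdc m = (if m % 2 = 1 then (1:ℝ)/2 else 0) + vdc (m/2) / 2 := by
  rw [vdc_eq_sum m (m+1) (Nat.le_succ m), Finset.sum_range_succ']
  rw [vdc_eq_sum (m/2) m (Nat.div_le_self m 2)]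
  have h1 : ∀ j, (if m.testBit (j+1) then (1:ℝ)/2^(j+1+1) else 0)
      = (if (m/2).testBit j then (1:ℝ)/2^(j+1) else 0) / 2 := by
    intro j
    rw [Nat.testBit_succ]
    split <;> ring
  rw [Finset.sum_congr rfl fun j _ => h1 j, ← Finset.sum_div]
  rw [add_comm]
  congr 1
  · rw [Nat.testBit_zero]
    rcases Nat.mod_two_eq_zero_or_one m with h | h <;> simp [h, Nat.mod_two_ne_one]

lemma vdc_nonneg (m : ℕ) : 0 ≤ vdc m := by
  unfold vdc
  apply Finset.sum_nonneg
  intro j _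
  split <;> positivity

lemma vdc_lt_one (m : ℕ) : vdc m < 1 := by
  induction m using Nat.strong_induction_on with
  | _ m ih =>
    rcases Nat.eq_zero_or_pos m with rfl | hm
    · simp [vdc]
    · rw [vdc_rec]
      have h2 := ih (m/2) (Nat.div_lt_self hm (by norm_num))
      split <;> linarith

lemma vdc_pos (m : ℕ) (hm : 1 ≤ m) : 0 < vdc m := by
  induction m using Nat.strong_induction_on with
  | _ m ih =>
    rw [vdc_rec]
    have h0 := vdc_nonneg (m/2)
    rcases Nat.mod_two_eq_zero_or_one m with h | h
    · have hm2 : 1 ≤ m / 2 := by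
        rcases Nat.lt_or_ge m 2 with h' | h'
        · interval_cases m <;> simp_all
        · exact (Nat.one_le_div_iff (by norm_num)).2 h'
      have := ih (m/2) (Nat.div_lt_self hm (by norm_num)) hm2
      simp [h]
      linarith
    · simp [h]; linarith

lemma vdc_injective : Function.Injective vdc := by
  intro m1 m2 h
  induction m1 using Nat.strong_induction_on generalizing m2 with
  | _ m1 ih =>
    rcases Nat.eq_zero_or_pos m1 with rfl | hm1
    · rcases Nat.eq_zero_or_pos m2 with rfl | hm2
      · rfl
      · exact absurd h.symm (ne_of_gt (by simpa [vdc] using vdc_pos m2 hm2))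
    rcases Nat.eq_zero_or_pos m2 with rfl | hm2
    · exact absurd h (ne_of_gt (by simpa [vdc] using vdc_pos m1 hm1))
    -- parities equal
    have key : ∀ a b : ℕ, a % 2 = 1 → b % 2 = 0 → vdc a ≠ vdc b := by
      intro a b ha hb
      rw [vdc_rec a, vdc_rec b, ha, hb]
      have h1 := vdc_nonneg (a/2)
      have h2 := vdc_lt_one (b/2)
      simp only [if_pos, if_neg]
      intro hc
      norm_num at hc
      linarith
    have hpar : m1 % 2 = m2 % 2 := by
      rcases Nat.mod_two_eq_zero_or_one m1 with p1 | p1 <;>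
        rcases Nat.mod_two_eq_zero_or_one m2 with p2 | p2
      · rw [p1, p2]
      · exact absurd h.symm (key m2 m1 p2 p1)
      · exact absurd h (key m1 m2 p1 p2)
      · rw [p1, p2]
    have hhalf : vdc (m1/2) = vdc (m2/2) := by
      rw [vdc_rec m1, vdc_rec m2, hpar] at h
      have := add_left_cancel h
      field_simp at this
      exact this
    have := ih (m1/2) (Nat.div_lt_self hm1 (by norm_num)) hhalf
    omega

def natrev : ℕ → ℕ → ℕ
  | 0, _ => 0
  | K+1, m => (m % 2) * 2^K + natrev K (m/2)

lemma natrev_lt : ∀ K m, m < 2^K → natrev K m < 2^K := by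
  intro K
  induction K with
  | zero => intro m hm; simpa [natrev] using hm
  | succ K ih =>
    intro m hm
    have h2 : m / 2 < 2 ^ K := by omega
    have := ih (m/2) h2
    have hb : m % 2 ≤ 1 := by omega
    simp only [natrev]
    have : (m % 2) * 2^K ≤ 2^K := by
      calc (m % 2) * 2^K ≤ 1 * 2^K := Nat.mul_le_mul_right _ hb
      _ = 2^K := one_mul _
    have hp : 2^(K+1) = 2^K + 2^K := by ring
    omega

lemma vdc_eq_natrev : ∀ K m, m < 2^K → vdc m = (natrev K m : ℝ) / 2^K := by
  intro K
  induction K with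
  | zero =>
    intro m hm
    have : m = 0 := by omega
    subst this
    simp [vdc, natrev]
  | succ K ih =>
    intro m hm
    have h2 : m / 2 < 2 ^ K := by omega
    rw [vdc_rec, ih (m/2) h2]
    simp only [natrev]
    push_cast
    rcases Nat.mod_two_eq_zero_or_one m with h | h <;> rw [h] <;> push_cast <;>
      simp only [pow_succ] <;> field_simp <;> ring

lemma natrev_surj (K a : ℕ) (ha : a < 2^K) : ∃ m, m < 2^K ∧ natrev K m = a := by
  have hinj : Set.InjOn (natrev K) (Finset.range (2^K)) := by
    intro m1 h1 m2 h2 he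
    simp only [Finset.coe_range, Set.mem_Iio] at h1 h2
    apply vdc_injective
    rw [vdc_eq_natrev K m1 h1, vdc_eq_natrev K m2 h2, he]
  have hsub : Finset.image (natrev K) (Finset.range (2^K)) ⊆ Finset.range (2^K) := by
    intro x hx
    simp only [Finset.mem_image, Finset.mem_range] at hx ⊢
    obtain ⟨m, hm, rfl⟩ := hx
    exact natrev_lt K m hm
  have hcard : (Finset.image (natrev K) (Finset.range (2^K))).card = 2^K := by
    rw [Finset.card_image_of_injOn hinj, Finset.card_range]
  have heq : Finset.image (natrev K) (Finset.range (2^K)) = Finset.range (2^K) :=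
    Finset.eq_of_subset_of_card_le hsub (by rw [hcard, Finset.card_range])
  have hmem : a ∈ Finset.image (natrev K) (Finset.range (2^K)) := by
    rw [heq]; exact Finset.mem_range.2 ha
  obtain ⟨m, hm, hrm⟩ := Finset.mem_image.1 hmem
  exact ⟨m, Finset.mem_range.1 hm, hrm⟩

theorem stmt_2 (k n : ℕ) (h1 : 2 ^ k ≤ n) (h2 : n < 2 ^ (k + 1)) (y : ℕ → ℝ)
    (hy0 : y 0 = 0)
    (hmono : ∀ i j, i < j → j ≤ n → y i < y j)
    (hlt1 : y n < 1)
    (himg : ∀ v : ℝ, (∃ i, i ≤ n ∧ y i = v) ↔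
      (v = 0 ∨ ∃ m, 1 ≤ m ∧ m ≤ n ∧ vdc m = v)) :
    (∀ i < n, y (i + 1) - y i = 1 / 2 ^ k ∨ y (i + 1) - y i = 1 / 2 ^ (k + 1)) ∧
      (1 - y n = 1 / 2 ^ k ∨ 1 - y n = 1 / 2 ^ (k + 1)) := by
  have hD : (0:ℝ) < 2^(k+1) := by positivity
  have hDk : (0:ℝ) < 2^k := by positivity
  have stepA : ∀ i, i ≤ n → ∃ a : ℕ, a < 2^(k+1) ∧ y i = (a:ℝ) / 2^(k+1) := by
    intro i hi
    rcases (himg (y i)).1 ⟨i, hi, rfl⟩ with h0 | ⟨m, hm1, hmn, hv⟩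
    · exact ⟨0, by positivity, by simp [h0]⟩
    · have hm2 : m < 2^(k+1) := lt_of_le_of_lt hmn h2
      exact ⟨natrev (k+1) m, natrev_lt _ _ hm2, by rw [← hv, vdc_eq_natrev _ _ hm2]⟩
  have stepB : ∀ a : ℕ, a < 2^k → ∃ i, i ≤ n ∧ y i = (a:ℝ)/2^k := by
    intro a ha
    obtain ⟨m, hm, hrm⟩ := natrev_surj k a ha
    have hv : vdc m = (a:ℝ)/2^k := by rw [vdc_eq_natrev k m hm, hrm]
    rcases Nat.eq_zero_or_pos m with rfl | hm1
    · have h0 : (a:ℝ)/2^k = 0 := by rw [← hv]; simp [vdc]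
      exact ⟨0, Nat.zero_le n, by rw [hy0, h0]⟩
    · exact (himg _).2 (Or.inr ⟨m, hm1, le_trans hm.le h1, hv⟩)
  have hle : ∀ i i', i ≤ n → i' ≤ i → y i' ≤ y i := by
    intro i i' hi hii
    rcases lt_or_eq_of_le hii with h | h
    · exact (hmono i' i h hi).le
    · rw [h]
  -- key: between consecutive indices there is no point of the set
  have key : ∀ a b : ℕ, b ≤ 2^(k+1) → a + 3 ≤ b →
      (∀ i', i' ≤ n → y i' ≤ (a:ℝ)/2^(k+1) ∨ (b:ℝ)/2^(k+1) ≤ y i') → False := by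
    intro a b hb hab hmid
    set c := a/2 + 1 with hc
    have hc1 : a < 2*c ∧ 2*c < b ∧ c < 2^k := by
      constructor; · omega
      constructor; · omega
      · have : 2*c < 2^(k+1) := by omega
        have h2k : 2^(k+1) = 2*2^k := by ring
        omega
    obtain ⟨i', hi', hyi'⟩ := stepB c hc1.2.2
    have hcast : y i' = (2*c : ℕ) / (2:ℝ)^(k+1) := by
      rw [hyi']
      push_cast
      rw [pow_succ]
      ring
    rcases hmid i' hi' with h | h
    · rw [hcast] at h
      have := (div_le_div_iff_of_pos_right hD).1 h
      have : (2*c : ℕ) ≤ a := by exact_mod_cast this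
      omega
    · rw [hcast] at h
      have := (div_le_div_iff_of_pos_right hD).1 h
      have : b ≤ (2*c : ℕ) := by exact_mod_cast this
      omega
  constructor
  · intro i hi
    obtain ⟨a, ha, hya⟩ := stepA i (le_of_lt hi)
    obtain ⟨b, hb, hyb⟩ := stepA (i+1) hi
    have hab : a < b := by
      have := hmono i (i+1) (Nat.lt_succ_self i) hi
      rw [hya, hyb] at this
      have := (div_lt_div_iff_of_pos_right hD).1 this
      exact_mod_cast this
    have hb2 : b ≤ a + 2 := by
      by_contra hcon
      apply key a b hb.le (by omega)
      intro i' hi'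
      rcases le_or_gt i' i with h | h
      · exact Or.inl (by rw [← hya]; exact hle i i' hi.le h)
      · exact Or.inr (by rw [← hyb]; exact hle i' (i+1) hi' h)
    have hgap : y (i+1) - y i = ((b:ℝ) - a) / 2^(k+1) := by
      rw [hya, hyb]; ring
    rcases (by omega : b = a + 1 ∨ b = a + 2) with rfl | rfl
    · right
      rw [hgap]; push_cast; ring_nf
    · left
      rw [hgap]
      push_cast
      rw [pow_succ]
      field_simp
      ring
  · obtain ⟨a, ha, hya⟩ := stepA n le_rfl
    have ha2 : 2^(k+1) ≤ a + 2 := by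
      by_contra hcon
      apply key a (2^(k+1)) le_rfl (by omega)
      intro i' hi'
      exact Or.inl (by rw [← hya]; exact hle n i' le_rfl hi')
    have hgap : 1 - y n = ((2^(k+1) : ℕ) - (a:ℝ)) / 2^(k+1) := by
      rw [hya]
      push_cast
      field_simp
    rcases (by omega : 2^(k+1) = a + 1 ∨ 2^(k+1) = a + 2) with he | he
    · right
      rw [hgap, he]
      push_cast
      ring_nf
    · left
      rw [hgap, he]
      push_cast
      rw [pow_succ]
      field_simp
      ring
end

section
/- For the van der Corput sequence (x_m) in base 2, there is a constant C > 0 such that for all N ≥ 1 and all B with 0 ≤ B ≤ 1, |#{1 ≤ m ≤ N : x_m ≤ B} - N·B| ≤ C·(log(N) + 1). -/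
lemma vdc_eq (K m : ℕ) (h : m ≤ K) :
    vdc m = ∑ j ∈ Finset.range K, if m.testBit j then (1 : ℝ) / 2 ^ (j + 1) else 0 := by
  unfold vdc
  apply Finset.sum_subset (Finset.range_subset_range.2 h)
  intro j hj hjm
  simp only [Finset.mem_range, not_lt] at hjm
  have : m < 2 ^ j := lt_of_lt_of_le (Nat.lt_two_pow_self (n := m)) (Nat.pow_le_pow_right (by norm_num) hjm)
  rw [Nat.testBit_lt_two_pow this]
  simp

lemma vdc_two_mul (m : ℕ) : vdc (2 * m) = vdc m / 2 := by
  rw [vdc_eq (2*m+1) (2*m) (by omega), vdc_eq (2*m) m (by omega)]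
  rw [Finset.sum_range_succ']
  have h0 : (2*m).testBit 0 = false := by simp [Nat.testBit_zero]; try omega
  rw [h0]
  simp only [Bool.false_eq_true, if_false]
  rw [Finset.sum_div]
  rw [add_zero]
  apply Finset.sum_congr rfl
  intro j _
  have : (2*m).testBit (j+1) = m.testBit j := by
    rw [Nat.testBit_succ]
    congr 1
    omega
  rw [this]
  split <;> [skip; simp]
  rw [pow_succ]
  ring

lemma vdc_two_mul_add_one (m : ℕ) : vdc (2 * m + 1) = 1/2 + vdc m / 2 := by
  rw [vdc_eq (2*m+1) (2*m+1) (le_refl _), vdc_eq (2*m) m (by omega)]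
  rw [Finset.sum_range_succ']
  have h0 : (2*m+1).testBit 0 = true := by simp [Nat.testBit_zero]; try omega
  rw [h0]
  simp only [show (true = true) = True from by simp, if_true]
  rw [Finset.sum_div]
  rw [add_comm]
  congr 1
  · norm_num
  apply Finset.sum_congr rfl
  intro j _
  have : (2*m+1).testBit (j+1) = m.testBit j := by
    rw [Nat.testBit_succ]
    congr 1
    omega
  rw [this]
  split <;> [skip; simp]
  rw [pow_succ]
  ring

noncomputable def cnt (N : ℕ) (B : ℝ) : ℕ :=
  ((Finset.Icc 1 N).filter (fun m => vdc m ≤ B)).card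

lemma Icc_partition (N : ℕ) (hN : 1 ≤ N) :
    Finset.Icc 1 N =
      ((Finset.Icc 1 (N/2)).image (fun a => 2*a)) ∪
      ((Finset.Icc 0 ((N-1)/2)).image (fun a => 2*a+1)) := by
  ext m
  simp only [Finset.mem_Icc, Finset.mem_union, Finset.mem_image]
  constructor
  · rintro ⟨h1, h2⟩
    rcases Nat.even_or_odd m with ⟨a, ha⟩ | ⟨a, ha⟩
    · left; refine ⟨a, ?_, ?_⟩ <;> omega
    · right; refine ⟨a, ?_, ?_⟩ <;> omega
  · rintro (⟨a, ha, rfl⟩ | ⟨a, ha, rfl⟩) <;> omega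

lemma cnt_lt_half (N : ℕ) (hN : 1 ≤ N) (B : ℝ) (hB : B < 1/2) :
    cnt N B = cnt (N/2) (2*B) := by
  unfold cnt
  rw [Icc_partition N hN, Finset.filter_union, Finset.card_union_of_disjoint]
  · have hodd : ((Finset.Icc 0 ((N-1)/2)).image (fun a => 2*a+1)).filter
        (fun m => vdc m ≤ B) = ∅ := by
      apply Finset.filter_false_of_mem
      intro m hm
      simp only [Finset.mem_image] at hm
      obtain ⟨a, _, rfl⟩ := hm
      rw [vdc_two_mul_add_one]
      have := vdc_nonneg a
      intro h; linarith
    rw [hodd, Finset.card_empty, add_zero]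
    rw [Finset.filter_image]
    rw [Finset.card_image_of_injective _ (fun a b h => by omega)]
    congr 1
    apply Finset.filter_congr
    intro a _
    simp only [Function.comp, vdc_two_mul]
    constructor <;> intro h <;> [linarith; linarith]
  · apply Finset.disjoint_filter_filter
    rw [Finset.disjoint_left]
    intro m hm hm'
    simp only [Finset.mem_image] at hm hm'
    obtain ⟨a, _, rfl⟩ := hm
    obtain ⟨b, _, h⟩ := hm'
    omega

lemma cnt_ge_half (N : ℕ) (hN : 1 ≤ N) (B : ℝ) (hB : 1/2 ≤ B) :
    cnt N B = N/2 + 1 + cnt ((N-1)/2) (2*B - 1) := by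
  unfold cnt
  rw [Icc_partition N hN, Finset.filter_union, Finset.card_union_of_disjoint]
  · have heven : ((Finset.Icc 1 (N/2)).image (fun a => 2*a)).filter
        (fun m => vdc m ≤ B) = (Finset.Icc 1 (N/2)).image (fun a => 2*a) := by
      apply Finset.filter_true_of_mem
      intro m hm
      simp only [Finset.mem_image] at hm
      obtain ⟨a, _, rfl⟩ := hm
      rw [vdc_two_mul]
      have := vdc_lt_one a
      linarith
    have hce : (((Finset.Icc 1 (N/2)).image (fun a => 2*a)).filter
        (fun m => vdc m ≤ B)).card = N/2 := by
      rw [heven, Finset.card_image_of_injective _ (fun a b h => by omega), Nat.card_Icc]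
      omega
    have hco : (((Finset.Icc 0 ((N-1)/2)).image (fun a => 2*a+1)).filter
        (fun m => vdc m ≤ B)).card =
        ((Finset.Icc 1 ((N-1)/2)).filter (fun m => vdc m ≤ 2*B-1)).card + 1 := by
      rw [Finset.filter_image]
      rw [Finset.card_image_of_injective _ (fun a b h => by omega)]
      have hsplit : Finset.Icc 0 ((N-1)/2) = insert 0 (Finset.Icc 1 ((N-1)/2)) := by
        ext a; simp only [Finset.mem_Icc, Finset.mem_insert]; omega
      rw [hsplit, Finset.filter_insert]
      have h0 : vdc (2*0+1) ≤ B := by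
        rw [vdc_two_mul_add_one]
        have : vdc 0 = 0 := by simp [vdc]
        rw [this]
        linarith
      rw [if_pos h0, Finset.card_insert_of_notMem (by simp)]
      congr 1
      congr 1
      apply Finset.filter_congr
      intro a _
      simp only [vdc_two_mul_add_one]
      constructor <;> intro h <;> [linarith; linarith]
    rw [hce, hco]
    omega
  · apply Finset.disjoint_filter_filter
    rw [Finset.disjoint_left]
    intro m hm hm'
    simp only [Finset.mem_image] at hm hm'
    obtain ⟨a, _, rfl⟩ := hm
    obtain ⟨b, _, h⟩ := hm'
    omega

lemma vdc_one : vdc 1 = 1/2 := by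
  have h : Nat.testBit 1 0 = true := by decide
  simp [vdc, Finset.sum_range_one, h]

lemma cnt_zero (B : ℝ) : cnt 0 B = 0 := by
  simp [cnt]

lemma key (N : ℕ) : ∀ B : ℝ, 0 ≤ B → B ≤ 1 →
    |(cnt N B : ℝ) - N * B| ≤ 2 * (Real.log N + 1) := by
  induction N using Nat.strong_induction_on with
  | _ N ih =>
  intro B hB0 hB1
  match N, ih with
  | 0, ih => simp [cnt_zero, Real.log_zero]
  | 1, ih =>
    have hc : cnt 1 B = if vdc 1 ≤ B then 1 else 0 := by
      simp [cnt, Finset.Icc_self, Finset.filter_singleton]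
      split <;> simp
    rw [hc]
    simp only [Nat.cast_one, Real.log_one, one_mul]
    split <;> [skip; skip] <;>
    · rw [abs_le]; constructor <;> [norm_num; norm_num] <;> linarith
  | (n+2), ih =>
    set N := n + 2 with hNdef
    have hN2 : 2 ≤ N := by omega
    have hlog2 : (0.6931471803 : ℝ) < Real.log 2 := Real.log_two_gt_d9
    rcases lt_or_ge B (1/2) with hB | hB
    · -- B < 1/2 case
      rw [cnt_lt_half N (by omega) B hB]
      set N₁ := N / 2 with hN1
      have hN1pos : 1 ≤ N₁ := by omega
      have hIH := ih N₁ (by omega) (2*B) (by linarith) (by linarith)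
      have hnat1 : 2 * N₁ ≤ N := by omega
      have hnat2 : N ≤ 2 * N₁ + 1 := by omega
      have hr1 : (2 * (N₁:ℝ)) ≤ N := by exact_mod_cast hnat1
      have hr2 : (N:ℝ) ≤ 2 * N₁ + 1 := by exact_mod_cast hnat2
      have hsplit : (cnt N₁ (2*B) : ℝ) - N * B =
          ((cnt N₁ (2*B) : ℝ) - N₁ * (2*B)) + (2 * N₁ - N) * B := by ring
      have hR : |((2 * (N₁:ℝ)) - N) * B| ≤ 1/2 := by
        rw [abs_mul]
        have h1 : |(2 * (N₁:ℝ)) - N| ≤ 1 := by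
          rw [abs_le]; constructor <;> linarith
        have h2 : |B| ≤ 1/2 := by rw [abs_le]; constructor <;> linarith
        calc |(2 * (N₁:ℝ)) - N| * |B| ≤ 1 * (1/2) := by
              apply mul_le_mul h1 h2 (abs_nonneg _) (by norm_num)
          _ = 1/2 := by norm_num
      have hlog : Real.log N₁ + 1/4 ≤ Real.log N := by
        have : Real.log (2 * N₁) ≤ Real.log N := by
          apply Real.log_le_log (by positivity) hr1
        rw [Real.log_mul (by norm_num) (by positivity)] at this
        linarith
      calc |(cnt N₁ (2*B) : ℝ) - N * B|
          ≤ |(cnt N₁ (2*B) : ℝ) - N₁ * (2*B)| + |((2 * (N₁:ℝ)) - N) * B| := by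
            rw [hsplit]; exact abs_add_le _ _
        _ ≤ 2 * (Real.log N₁ + 1) + 1/2 := by linarith
        _ ≤ 2 * (Real.log N + 1) := by linarith
    · -- B ≥ 1/2 case
      rw [cnt_ge_half N (by omega) B hB]
      set N₁ := N / 2 with hN1
      set N₂ := (N - 1) / 2 with hN2d
      have hIH := ih N₂ (by omega) (2*B - 1) (by linarith) (by linarith)
      have hnat1 : N = N₁ + N₂ + 1 := by omega
      have hnat2 : N₂ ≤ N₁ := by omega
      have hnat3 : N₁ ≤ N₂ + 1 := by omega
      have hr0 : (N:ℝ) = N₁ + N₂ + 1 := by exact_mod_cast hnat1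
      have hr2 : (N₂:ℝ) ≤ N₁ := by exact_mod_cast hnat2
      have hr3 : (N₁:ℝ) ≤ N₂ + 1 := by exact_mod_cast hnat3
      have hcast : ((N₁ + 1 + cnt N₂ (2*B-1) : ℕ) : ℝ)
          = (N₁:ℝ) + 1 + (cnt N₂ (2*B-1) : ℝ) := by push_cast; ring
      rw [hcast]
      have hsplit : (N₁:ℝ) + 1 + (cnt N₂ (2*B-1) : ℝ) - N * B =
          ((cnt N₂ (2*B-1) : ℝ) - N₂ * (2*B-1)) + (1 - B) * ((N₁:ℝ) + 1 - N₂) := by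
        rw [hr0]; ring
      have hR : |(1 - B) * ((N₁:ℝ) + 1 - N₂)| ≤ 1 := by
        rw [abs_mul]
        have h1 : |1 - B| ≤ 1/2 := by rw [abs_le]; constructor <;> linarith
        have h2 : |(N₁:ℝ) + 1 - N₂| ≤ 2 := by rw [abs_le]; constructor <;> linarith
        calc |1 - B| * |(N₁:ℝ) + 1 - N₂| ≤ (1/2) * 2 := by
              apply mul_le_mul h1 h2 (abs_nonneg _) (by norm_num)
          _ = 1 := by norm_num
      have hlog : Real.log N₂ + 1/2 ≤ Real.log N := by
        rcases Nat.eq_zero_or_pos N₂ with h0 | hpos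
        · rw [h0]
          simp only [Nat.cast_zero, Real.log_zero]
          have : Real.log 2 ≤ Real.log N := by
            apply Real.log_le_log (by norm_num)
            exact_mod_cast hN2
          linarith
        · have h2N : 2 * N₂ ≤ N := by omega
          have : Real.log (2 * N₂) ≤ Real.log N := by
            apply Real.log_le_log (by positivity) (by exact_mod_cast h2N)
          rw [Real.log_mul (by norm_num) (by positivity)] at this
          linarith
      calc |(N₁:ℝ) + 1 + (cnt N₂ (2*B-1) : ℝ) - N * B|
          ≤ |(cnt N₂ (2*B-1) : ℝ) - N₂ * (2*B-1)| + |(1 - B) * ((N₁:ℝ) + 1 - N₂)| := by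
            rw [hsplit]; exact abs_add_le _ _
        _ ≤ 2 * (Real.log N₂ + 1) + 1 := by linarith
        _ ≤ 2 * (Real.log N + 1) := by linarith

theorem stmt_5 :
    ∃ C : ℝ, 0 < C ∧ ∀ N : ℕ, 1 ≤ N → ∀ B : ℝ, 0 ≤ B → B ≤ 1 →
      |(({m : ℕ | 1 ≤ m ∧ m ≤ N ∧ vdc m ≤ B}.ncard : ℝ)) - N * B| ≤
        C * (Real.log N + 1) := by
  refine ⟨2, by norm_num, fun N hN B hB0 hB1 => ?_⟩
  have hset : {m : ℕ | 1 ≤ m ∧ m ≤ N ∧ vdc m ≤ B} =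
      ↑((Finset.Icc 1 N).filter (fun m => vdc m ≤ B)) := by
    ext m
    simp only [Set.mem_setOf_eq, Finset.coe_filter, Finset.mem_Icc]
    tauto
  rw [hset, Set.ncard_coe_finset]
  exact key N B hB0 hB1
end

section
/- Let φ = (1+√5)/2 and let {y} denote the fractional part of y. There exists an absolute constant C such that for every k ≥ 1 and every interval [x, x+ε] ⊆ [0,1] (interpreted cyclically on the circle R/Z), the number of m with 0 ≤ m ≤ F_k − 1 and {mφ} ∈ [x, x+ε] differs from F_k·ε by at most C. -/
open Real goldenRatio Finset

namespace Stmt8Aux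

lemma fract_shift (a t : ℝ) : Int.fract (a + t) = Int.fract (Int.fract a + t) := by
  have h : a + t = Int.fract a + t + (⌊a⌋ : ℝ) := by
    rw [← Int.self_sub_floor]; ring
  rw [h, Int.fract_add_intCast]

lemma fract_le_of_nonneg {y : ℝ} (hy : 0 ≤ y) : Int.fract y ≤ y := by
  have h : (0:ℝ) ≤ (⌊y⌋ : ℝ) := by exact_mod_cast Int.floor_nonneg.mpr hy
  have h2 : y - (⌊y⌋:ℝ) = Int.fract y := Int.self_sub_floor y
  linarith

lemma pert_upper {a η ε δ : ℝ} (hη : |η| ≤ δ) (hε : 0 ≤ ε)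
    (h : Int.fract (a + η) ≤ ε) :
    Int.fract a ≤ ε + δ ∨ 1 - δ ≤ Int.fract a := by
  by_contra hc
  push_neg at hc
  obtain ⟨h1, h2⟩ := hc
  have habs := abs_le.mp hη
  rw [fract_shift] at h
  rw [Int.fract_eq_self.mpr ⟨by linarith, by linarith⟩] at h
  linarith

lemma pert_lower {a η ε δ : ℝ} (hη : |η| ≤ δ) (h2δ : 2*δ ≤ ε)
    (h : Int.fract (a - δ) ≤ ε - 2*δ) : Int.fract (a + η) ≤ ε := by
  have habs := abs_le.mp hη
  have hc0 := Int.fract_nonneg (a - δ)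
  have key : a + η = (a - δ) + (δ + η) := by ring
  rw [key, fract_shift]
  have h1 : 0 ≤ Int.fract (a - δ) + (δ + η) := by linarith
  calc Int.fract (Int.fract (a - δ) + (δ + η)) ≤ Int.fract (a - δ) + (δ + η) :=
        fract_le_of_nonneg h1
    _ ≤ ε := by linarith

lemma pert_wrap {y δ : ℝ} (hδ1 : δ < 1) (h : 1 - δ ≤ Int.fract y) :
    Int.fract (y + δ) ≤ δ := by
  have hb1 := Int.fract_lt_one y
  rw [fract_shift]
  have e : Int.fract (Int.fract y + δ) = Int.fract (Int.fract y + δ - 1) := by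
    rw [show Int.fract y + δ - 1 = Int.fract y + δ - ((1:ℤ):ℝ) by push_cast; ring,
      Int.fract_sub_intCast]
  rw [e, Int.fract_eq_self.mpr ⟨by linarith, by linarith⟩]
  linarith

lemma fract_char {u x : ℝ} (hu0 : 0 ≤ u) (hu1 : u < 1) (hx0 : 0 ≤ x) (hx1 : x ≤ 1) :
    Int.fract (u - x) = if x ≤ u then u - x else u - x + 1 := by
  split_ifs with h
  · exact Int.fract_eq_self.mpr ⟨by linarith, by linarith⟩
  · push_neg at h
    rw [← Int.fract_add_one (u - x),
      Int.fract_eq_self.mpr ⟨by linarith, by linarith⟩]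


set_option maxHeartbeats 1000000 in
lemma lat_upper (N : ℕ) (hN : 1 ≤ N) (x β : ℝ) (hx0 : 0 ≤ x) (hx1 : x ≤ 1)
    (hβ : 0 ≤ β) :
    ((((Finset.range N).filter (fun j : ℕ => Int.fract ((j:ℝ)/(N:ℝ) - x) ≤ β)).card : ℝ))
      ≤ (N:ℝ) * β + 1 := by
  have hNpos : (0:ℝ) < N := by exact_mod_cast hN
  by_cases hβ1 : 1 ≤ β
  · have h1 : (((Finset.range N).filter
        (fun j : ℕ => Int.fract ((j:ℝ)/(N:ℝ) - x) ≤ β)).card : ℝ) ≤ (N:ℝ) := by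
      exact_mod_cast (card_filter_le _ _).trans (card_range N).le
    nlinarith
  push_neg at hβ1
  have hmem : ∀ j ∈ (Finset.range N).filter
      (fun j : ℕ => Int.fract ((j:ℝ)/(N:ℝ) - x) ≤ β),
      (x ≤ (j:ℝ)/(N:ℝ) ∧ (j:ℝ) ≤ (N:ℝ)*(x+β)) ∨
      ((j:ℝ)/(N:ℝ) < x ∧ (j:ℝ) ≤ (N:ℝ)*(x+β-1)) := by
    intro j hj
    simp only [mem_filter, mem_range] at hj
    obtain ⟨hjN, hf⟩ := hj
    have hu0 : (0:ℝ) ≤ (j:ℝ)/(N:ℝ) := by positivity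
    have hu1 : (j:ℝ)/(N:ℝ) < 1 := by
      rw [div_lt_one hNpos]; exact_mod_cast hjN
    rw [fract_char hu0 hu1 hx0 hx1] at hf
    split_ifs at hf with h
    · left
      refine ⟨h, ?_⟩
      have := (div_le_iff₀ hNpos).mp (show (j:ℝ)/(N:ℝ) ≤ x + β by linarith)
      linarith
    · right
      push_neg at h
      refine ⟨h, ?_⟩
      have := (div_le_iff₀ hNpos).mp (show (j:ℝ)/(N:ℝ) ≤ x + β - 1 by linarith)
      linarith
  by_cases hxb : x + β < 1
  · set a := ⌈(N:ℝ)*x⌉₊ with ha_def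
    set b := ⌊(N:ℝ)*(x+β)⌋₊ with hb_def
    have hsub : (Finset.range N).filter (fun j : ℕ => Int.fract ((j:ℝ)/(N:ℝ) - x) ≤ β)
        ⊆ Finset.Icc a b := by
      intro j hj
      rcases hmem j hj with ⟨h1, h2⟩ | ⟨h1, h2⟩
      · rw [Finset.mem_Icc]
        constructor
        · exact Nat.ceil_le.mpr (by rw [mul_comm]; exact (le_div_iff₀ hNpos).mp h1)
        · exact Nat.le_floor h2
      · exfalso
        have hj0 : (0:ℝ) ≤ (j:ℝ) := Nat.cast_nonneg j
        nlinarith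
    have hcard : ((Finset.range N).filter
        (fun j : ℕ => Int.fract ((j:ℝ)/(N:ℝ) - x) ≤ β)).card ≤ b + 1 - a :=
      (card_le_card hsub).trans_eq (Nat.card_Icc a b)
    have ha : (N:ℝ)*x ≤ (a:ℝ) := Nat.le_ceil _
    have hb : (b:ℝ) ≤ (N:ℝ)*(x+β) := Nat.floor_le (by positivity)
    rcases le_or_gt a (b+1) with hab | hab
    · have hc : (((Finset.range N).filter
          (fun j : ℕ => Int.fract ((j:ℝ)/(N:ℝ) - x) ≤ β)).card : ℝ) ≤ (b:ℝ) + 1 - a := by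
        have := (Nat.cast_le (α := ℝ)).mpr hcard
        rwa [Nat.cast_sub hab, Nat.cast_add, Nat.cast_one] at this
      linarith
    · have : b + 1 - a = 0 := by omega
      rw [this] at hcard
      have : (((Finset.range N).filter
          (fun j : ℕ => Int.fract ((j:ℝ)/(N:ℝ) - x) ≤ β)).card : ℝ) ≤ 0 := by
        exact_mod_cast hcard
      nlinarith
  · push_neg at hxb
    set a := ⌈(N:ℝ)*x⌉₊ with ha_def
    set b1 := ⌊(N:ℝ)*(x+β-1)⌋₊ with hb1_def
    have hsub : (Finset.range N).filter (fun j : ℕ => Int.fract ((j:ℝ)/(N:ℝ) - x) ≤ β)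
        ⊆ Finset.Icc a (N-1) ∪ Finset.Icc 0 b1 := by
      intro j hj
      have hjN : j < N := by
        have := mem_filter.mp hj
        exact mem_range.mp this.1
      rcases hmem j hj with ⟨h1, h2⟩ | ⟨h1, h2⟩
      · refine Finset.mem_union_left _ ?_
        rw [Finset.mem_Icc]
        exact ⟨Nat.ceil_le.mpr (by rw [mul_comm]; exact (le_div_iff₀ hNpos).mp h1),
          by omega⟩
      · refine Finset.mem_union_right _ ?_
        rw [Finset.mem_Icc]
        exact ⟨Nat.zero_le j, Nat.le_floor h2⟩
    have hcard : ((Finset.range N).filter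
        (fun j : ℕ => Int.fract ((j:ℝ)/(N:ℝ) - x) ≤ β)).card ≤ (N - a) + (b1 + 1) := by
      refine (card_le_card hsub).trans ?_
      refine (card_union_le _ _).trans ?_
      rw [Nat.card_Icc, Nat.card_Icc]
      omega
    have hb1 : (b1:ℝ) ≤ (N:ℝ)*(x+β-1) := Nat.floor_le (by nlinarith)
    have ha : (N:ℝ)*x ≤ (a:ℝ) := Nat.le_ceil _
    have hNa : ((N - a : ℕ):ℝ) ≤ (N:ℝ) - (N:ℝ)*x := by
      rcases le_total a N with h | h
      · rw [Nat.cast_sub h]; linarith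
      · rw [Nat.sub_eq_zero_of_le h]
        simp only [Nat.cast_zero]
        nlinarith
    have hc : (((Finset.range N).filter
        (fun j : ℕ => Int.fract ((j:ℝ)/(N:ℝ) - x) ≤ β)).card : ℝ)
        ≤ ((N - a : ℕ):ℝ) + ((b1:ℝ) + 1) := by
      have := (Nat.cast_le (α := ℝ)).mpr hcard
      push_cast at this
      push_cast
      linarith
    nlinarith

set_option maxHeartbeats 1000000 in
lemma lat_lower (N : ℕ) (hN : 1 ≤ N) (x β : ℝ) (hx0 : 0 ≤ x) (hx1 : x ≤ 1)
    (hβ0 : 0 ≤ β) (hβ1 : β < 1) :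
    (N:ℝ) * β - 2 ≤
      (((Finset.range N).filter (fun j : ℕ => Int.fract ((j:ℝ)/(N:ℝ) - x) ≤ β)).card : ℝ) := by
  have hNpos : (0:ℝ) < N := by exact_mod_cast hN
  have hcard0 : (0:ℝ) ≤ (((Finset.range N).filter
      (fun j : ℕ => Int.fract ((j:ℝ)/(N:ℝ) - x) ≤ β)).card : ℝ) := Nat.cast_nonneg _
  have hmem0 : ∀ j : ℕ, j < N → x ≤ (j:ℝ)/(N:ℝ) → (j:ℝ)/(N:ℝ) - x ≤ β →
      j ∈ (Finset.range N).filter (fun j : ℕ => Int.fract ((j:ℝ)/(N:ℝ) - x) ≤ β) := by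
    intro j hjN h1 h2
    have hu0 : (0:ℝ) ≤ (j:ℝ)/(N:ℝ) := by positivity
    have hu1 : (j:ℝ)/(N:ℝ) < 1 := by rw [div_lt_one hNpos]; exact_mod_cast hjN
    simp only [mem_filter, mem_range]
    refine ⟨hjN, ?_⟩
    rw [fract_char hu0 hu1 hx0 hx1, if_pos h1]
    exact h2
  have hmem1 : ∀ j : ℕ, j < N → (j:ℝ)/(N:ℝ) < x → (j:ℝ)/(N:ℝ) - x + 1 ≤ β →
      j ∈ (Finset.range N).filter (fun j : ℕ => Int.fract ((j:ℝ)/(N:ℝ) - x) ≤ β) := by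
    intro j hjN h1 h2
    have hu0 : (0:ℝ) ≤ (j:ℝ)/(N:ℝ) := by positivity
    have hu1 : (j:ℝ)/(N:ℝ) < 1 := by rw [div_lt_one hNpos]; exact_mod_cast hjN
    simp only [mem_filter, mem_range]
    refine ⟨hjN, ?_⟩
    rw [fract_char hu0 hu1 hx0 hx1, if_neg (by push_neg; exact h1)]
    exact h2
  by_cases hxb : x + β < 1
  · set a := ⌈(N:ℝ)*x⌉₊ with ha_def
    set b := min (N-1) ⌊(N:ℝ)*(x+β)⌋₊ with hb_def
    have ha_ub : (a:ℝ) < (N:ℝ)*x + 1 := by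
      exact Nat.ceil_lt_add_one (by positivity)
    have hb_lb : (N:ℝ)*(x+β) - 1 ≤ (b:ℝ) := by
      rcases min_cases (N-1) ⌊(N:ℝ)*(x+β)⌋₊ with ⟨he, hle⟩ | ⟨he, hle⟩
      · rw [hb_def, he]
        have h1 : (N:ℝ)*(x+β) ≤ (N:ℝ) := by nlinarith
        have h2 : ((N - 1 : ℕ):ℝ) = (N:ℝ) - 1 := by
          rw [Nat.cast_sub hN]; norm_num
        rw [h2]; linarith
      · rw [hb_def, he]
        have := Nat.lt_floor_add_one ((N:ℝ)*(x+β))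
        linarith
    have hsub : Finset.Icc a b ⊆ (Finset.range N).filter
        (fun j : ℕ => Int.fract ((j:ℝ)/(N:ℝ) - x) ≤ β) := by
      intro j hj
      rw [Finset.mem_Icc] at hj
      obtain ⟨hja, hjb⟩ := hj
      have hjN : j < N := by
        have : j ≤ N - 1 := le_trans hjb (min_le_left _ _)
        omega
      have hxle : x ≤ (j:ℝ)/(N:ℝ) := by
        rw [le_div_iff₀ hNpos]
        have h1 : (a:ℝ) ≤ (j:ℝ) := by exact_mod_cast hja
        have := Nat.le_ceil ((N:ℝ)*x)
        nlinarith
      refine hmem0 j hjN hxle ?_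
      have hjf : (j:ℝ) ≤ (N:ℝ)*(x+β) := by
        have h1 : j ≤ ⌊(N:ℝ)*(x+β)⌋₊ := le_trans hjb (min_le_right _ _)
        have h2 : ((j:ℕ):ℝ) ≤ (⌊(N:ℝ)*(x+β)⌋₊:ℝ) := by exact_mod_cast h1
        have h3 : ((⌊(N:ℝ)*(x+β)⌋₊:ℕ):ℝ) ≤ (N:ℝ)*(x+β) := Nat.floor_le (by positivity)
        linarith
      rw [div_sub' (ne_of_gt hNpos), div_le_iff₀ hNpos]
      nlinarith
    rcases le_or_gt a b with hab | hab
    · have hcard : b + 1 - a ≤ ((Finset.range N).filter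
          (fun j : ℕ => Int.fract ((j:ℝ)/(N:ℝ) - x) ≤ β)).card := by
        rw [← Nat.card_Icc a b]
        exact card_le_card hsub
      have hc : (b:ℝ) + 1 - (a:ℝ) ≤ (((Finset.range N).filter
          (fun j : ℕ => Int.fract ((j:ℝ)/(N:ℝ) - x) ≤ β)).card : ℝ) := by
        have := (Nat.cast_le (α := ℝ)).mpr hcard
        rw [Nat.cast_sub (by omega), Nat.cast_add, Nat.cast_one] at this
        linarith
      linarith
    · have : (b:ℝ) + 1 ≤ (a:ℝ) := by exact_mod_cast hab
      linarith
  · push_neg at hxb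
    set a := ⌈(N:ℝ)*x⌉₊ with ha_def
    set b1 := min (N-1) ⌊(N:ℝ)*(x+β-1)⌋₊ with hb1_def
    have hx9 : (0:ℝ) ≤ (N:ℝ)*(x+β-1) := by nlinarith
    have ha_ub : (a:ℝ) < (N:ℝ)*x + 1 := Nat.ceil_lt_add_one (by positivity)
    have ha_lb : (N:ℝ)*x ≤ (a:ℝ) := Nat.le_ceil _
    have hb1_lb : (N:ℝ)*(x+β-1) - 1 ≤ (b1:ℝ) := by
      rcases min_cases (N-1) ⌊(N:ℝ)*(x+β-1)⌋₊ with ⟨he, hle⟩ | ⟨he, hle⟩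
      · rw [hb1_def, he]
        have h2 : ((N - 1 : ℕ):ℝ) = (N:ℝ) - 1 := by
          rw [Nat.cast_sub hN]; norm_num
        rw [h2]
        nlinarith
      · rw [hb1_def, he]
        have := Nat.lt_floor_add_one ((N:ℝ)*(x+β-1))
        linarith
    have hb1_ub : (b1:ℝ) ≤ (N:ℝ)*(x+β-1) := by
      have h1 : b1 ≤ ⌊(N:ℝ)*(x+β-1)⌋₊ := min_le_right _ _
      have h2 : (⌊(N:ℝ)*(x+β-1)⌋₊:ℝ) ≤ (N:ℝ)*(x+β-1) := Nat.floor_le hx9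
      have h3 : (b1:ℝ) ≤ (⌊(N:ℝ)*(x+β-1)⌋₊:ℝ) := by exact_mod_cast h1
      linarith
    have hsub1 : Finset.Icc a (N-1) ⊆ (Finset.range N).filter
        (fun j : ℕ => Int.fract ((j:ℝ)/(N:ℝ) - x) ≤ β) := by
      intro j hj
      rw [Finset.mem_Icc] at hj
      obtain ⟨hja, hjb⟩ := hj
      have hjN : j < N := by omega
      have hxle : x ≤ (j:ℝ)/(N:ℝ) := by
        rw [le_div_iff₀ hNpos]
        have h1 : (a:ℝ) ≤ (j:ℝ) := by exact_mod_cast hja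
        nlinarith
      refine hmem0 j hjN hxle ?_
      have hu1 : (j:ℝ)/(N:ℝ) < 1 := by rw [div_lt_one hNpos]; exact_mod_cast hjN
      nlinarith
    have hsub2 : Finset.Icc 0 b1 ⊆ (Finset.range N).filter
        (fun j : ℕ => Int.fract ((j:ℝ)/(N:ℝ) - x) ≤ β) := by
      intro j hj
      rw [Finset.mem_Icc] at hj
      obtain ⟨_, hjb⟩ := hj
      have hjN : j < N := by
        have : j ≤ N - 1 := le_trans hjb (min_le_left _ _)
        omega
      have hjr : (j:ℝ) ≤ (N:ℝ)*(x+β-1) := by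
        have h1 : (j:ℝ) ≤ (b1:ℝ) := by exact_mod_cast hjb
        linarith
      have hlt : (j:ℝ)/(N:ℝ) < x := by
        rw [div_lt_iff₀ hNpos]
        nlinarith
      refine hmem1 j hjN hlt ?_
      rw [div_sub' (ne_of_gt hNpos)]
      rw [div_add' _ _ _ (ne_of_gt hNpos), div_le_iff₀ hNpos]
      nlinarith
    have hdisj : Disjoint (Finset.Icc a (N-1)) (Finset.Icc 0 b1) := by
      rw [Finset.disjoint_left]
      intro j hj1 hj2
      rw [Finset.mem_Icc] at hj1 hj2
      have h1 : (a:ℝ) ≤ (j:ℝ) := by exact_mod_cast hj1.1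
      have h2 : (j:ℝ) ≤ (b1:ℝ) := by exact_mod_cast hj2.2
      have h3 : (N:ℝ)*(x+β-1) < (N:ℝ)*x :=
        mul_lt_mul_of_pos_left (by linarith) hNpos
      linarith
    have hcard : (Finset.Icc a (N-1)).card + (Finset.Icc 0 b1).card ≤
        ((Finset.range N).filter (fun j : ℕ => Int.fract ((j:ℝ)/(N:ℝ) - x) ≤ β)).card := by
      rw [← Finset.card_union_of_disjoint hdisj]
      exact card_le_card (Finset.union_subset hsub1 hsub2)
    rcases le_or_gt a (N-1) with haN | haN
    · have hc1 : (Finset.Icc a (N-1)).card = N - a := by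
        rw [Nat.card_Icc]; omega
      have hc2 : (Finset.Icc 0 b1).card = b1 + 1 := by
        rw [Nat.card_Icc]; omega
      rw [hc1, hc2] at hcard
      have hc : ((N - a : ℕ):ℝ) + ((b1:ℝ) + 1) ≤ (((Finset.range N).filter
          (fun j : ℕ => Int.fract ((j:ℝ)/(N:ℝ) - x) ≤ β)).card : ℝ) := by
        have := (Nat.cast_le (α := ℝ)).mpr hcard
        push_cast at this
        push_cast
        linarith
      have hNa : (N:ℝ) - (a:ℝ) ≤ ((N - a : ℕ):ℝ) := by
        rw [Nat.cast_sub (by omega)]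
      linarith
    · have hc2 : (Finset.Icc 0 b1).card = b1 + 1 := by
        rw [Nat.card_Icc]; omega
      have hcard2 : b1 + 1 ≤ ((Finset.range N).filter
          (fun j : ℕ => Int.fract ((j:ℝ)/(N:ℝ) - x) ≤ β)).card := by
        rw [← hc2]
        exact card_le_card hsub2
      have hc : (b1:ℝ) + 1 ≤ (((Finset.range N).filter
          (fun j : ℕ => Int.fract ((j:ℝ)/(N:ℝ) - x) ≤ β)).card : ℝ) := by
        exact_mod_cast hcard2
      have haN' : (N:ℝ) - 1 < (a:ℝ) := by
        have h1 : ((N-1:ℕ):ℝ) < (a:ℝ) := by exact_mod_cast haN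
        rw [Nat.cast_sub hN] at h1
        push_cast at h1
        linarith
      nlinarith


lemma fib_le_gold_pow : ∀ k : ℕ, (Nat.fib k : ℝ) ≤ goldenRatio ^ k := by
  intro k
  induction k using Nat.strong_induction_on with
  | _ k ih =>
    match k with
    | 0 => simp
    | 1 => simpa using one_lt_goldenRatio.le
    | (n+2) =>
      have h1 := ih n (by omega)
      have h2 := ih (n+1) (by omega)
      rw [Nat.fib_add_two]
      push_cast
      have he : goldenRatio ^ (n+2) = goldenRatio ^ n + goldenRatio ^ (n+1) := by
        have : goldenRatio ^ (n+2) = goldenRatio ^ n * goldenRatio ^ 2 := by ring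
        rw [this, goldenRatio_sq]
        ring
      linarith

lemma fib_mul_gold (k : ℕ) :
    (Nat.fib k : ℝ) * goldenRatio = (Nat.fib (k+1) : ℝ) - goldenConj ^ k := by
  have h5 : (0:ℝ) < √5 := Real.sqrt_pos.mpr (by norm_num)
  obtain ⟨A, hA⟩ : ∃ A, (goldenRatio:ℝ) = A := ⟨_, rfl⟩
  obtain ⟨B, hB⟩ : ∃ B, (goldenConj:ℝ) = B := ⟨_, rfl⟩
  have hab : A - B = √5 := by rw [← hA, ← hB]; exact goldenRatio_sub_goldenConj
  rw [Real.coe_fib_eq, Real.coe_fib_eq, hA, hB, ← hab]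
  have hAB : A - B ≠ 0 := by rw [hab]; exact ne_of_gt h5
  field_simp
  ring

lemma abs_goldConj_eq : |goldenConj| = goldenRatio⁻¹ := by
  rw [inv_goldenRatio, abs_of_neg goldenConj_neg]

lemma card_filter_comp (N : ℕ) (g : ℕ → ℕ)
    (hmem : ∀ m ∈ Finset.range N, g m ∈ Finset.range N)
    (hinj : ∀ m1 ∈ Finset.range N, ∀ m2 ∈ Finset.range N, g m1 = g m2 → m1 = m2)
    (Q : ℕ → Prop) [DecidablePred Q] :
    ((Finset.range N).filter (fun m => Q (g m))).card
      = ((Finset.range N).filter Q).card := by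
  apply Finset.card_bij (fun m _ => g m)
  · intro m hm
    simp only [mem_filter] at hm ⊢
    exact ⟨mem_range.mp (hmem m hm.1) |> mem_range.mpr, hm.2⟩
  · intro m1 h1 m2 h2 he
    exact hinj m1 (mem_of_mem_filter m1 h1) m2 (mem_of_mem_filter m2 h2) he
  · intro j hj
    simp only [mem_filter] at hj
    obtain ⟨a, ha, hae⟩ := Finset.surj_on_of_inj_on_of_card_le
      (s := Finset.range N) (t := Finset.range N) (fun m _ => g m)
      (fun m hm => hmem m hm)
      (fun a1 a2 ha1 ha2 h => hinj a1 ha1 a2 ha2 h) le_rfl j hj.1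
    exact ⟨a, mem_filter.mpr ⟨ha, by rw [← hae]; exact hj.2⟩, hae.symm⟩


end Stmt8Aux

open Stmt8Aux in
set_option maxHeartbeats 1000000 in
theorem stmt_8 :
    ∃ C : ℝ, 0 < C ∧ ∀ k : ℕ, 1 ≤ k → ∀ x ε : ℝ, 0 ≤ x → x ≤ 1 → 0 ≤ ε → ε ≤ 1 →
      |(({m : ℕ | m ≤ Nat.fib k - 1 ∧
            Int.fract ((m : ℝ) * ((1 + Real.sqrt 5) / 2) - x) ≤ ε}.ncard : ℝ)) -
          (Nat.fib k : ℝ) * ε| ≤ C := by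
  refine ⟨5, by norm_num, ?_⟩
  intro k hk x ε hx0 hx1 hε0 hε1
  set N := Nat.fib k with hNdef
  have hN : 1 ≤ N := Nat.fib_pos.mpr (by omega)
  have hNpos : (0:ℝ) < (N:ℝ) := by exact_mod_cast hN
  have hset : {m : ℕ | m ≤ N - 1 ∧
      Int.fract ((m : ℝ) * ((1 + Real.sqrt 5) / 2) - x) ≤ ε} =
      ↑((Finset.range N).filter
        (fun m : ℕ => Int.fract ((m:ℝ) * goldenRatio - x) ≤ ε)) := by
    ext m
    simp only [Set.mem_setOf_eq, Finset.coe_filter, Finset.mem_range]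
    constructor
    · rintro ⟨h1, h2⟩; exact ⟨by omega, h2⟩
    · rintro ⟨h1, h2⟩; exact ⟨by omega, h2⟩
  rw [hset, Set.ncard_coe_finset]
  set S := (Finset.range N).filter
    (fun m : ℕ => Int.fract ((m:ℝ) * goldenRatio - x) ≤ ε) with hSdef
  set δ : ℝ := goldenRatio⁻¹ ^ k with hδdef
  have hφ0 : (0:ℝ) < goldenRatio := goldenRatio_pos
  have hδpos : 0 < δ := by positivity
  have hinv1 : goldenRatio⁻¹ < 1 := inv_lt_one_of_one_lt₀ one_lt_goldenRatio
  have hδ1 : δ < 1 := by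
    calc δ ≤ goldenRatio⁻¹ ^ 1 := pow_le_pow_of_le_one (by positivity) hinv1.le hk
    _ = goldenRatio⁻¹ := pow_one _
    _ < 1 := hinv1
  have hNδ : (N:ℝ) * δ ≤ 1 := by
    have h1 : (N:ℝ) ≤ goldenRatio ^ k := fib_le_gold_pow k
    have h2 : δ = (goldenRatio ^ k)⁻¹ := by rw [hδdef, inv_pow]
    rw [h2, ← div_eq_mul_inv, div_le_one (pow_pos goldenRatio_pos k)]
    exact h1
  set g : ℕ → ℕ := fun m => (m * Nat.fib (k+1)) % N with hgdef
  have hgmem : ∀ m ∈ Finset.range N, g m ∈ Finset.range N := by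
    intro m _
    exact Finset.mem_range.mpr (Nat.mod_lt _ (by omega))
  have hginj : ∀ m1 ∈ Finset.range N, ∀ m2 ∈ Finset.range N,
      g m1 = g m2 → m1 = m2 := by
    intro m1 h1 m2 h2 he
    rw [Finset.mem_range] at h1 h2
    have hco : Nat.gcd N (Nat.fib (k+1)) = 1 := Nat.fib_coprime_fib_succ k
    have hmod : m1 * Nat.fib (k+1) ≡ m2 * Nat.fib (k+1) [MOD N] := he
    have h3 := Nat.ModEq.cancel_right_of_coprime hco hmod
    rwa [Nat.ModEq, Nat.mod_eq_of_lt h1, Nat.mod_eq_of_lt h2] at h3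
  have hkey : ∀ m : ℕ, m < N → ∃ η : ℝ, |η| ≤ δ ∧
      ∀ t : ℝ, Int.fract ((m:ℝ) * goldenRatio - t)
        = Int.fract ((g m : ℝ)/(N:ℝ) - t + η) := by
    intro m hm
    set q := (m * Nat.fib (k+1)) / N with hq
    refine ⟨-((m:ℝ) * goldenConj ^ k) / (N:ℝ), ?_, ?_⟩
    · rw [abs_div, abs_neg, abs_mul, abs_pow, Nat.abs_cast, abs_goldConj_eq,
        abs_of_pos hNpos, div_le_iff₀ hNpos]
      have hmN : (m:ℝ) ≤ (N:ℝ) := by exact_mod_cast hm.le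
      have hp : (0:ℝ) ≤ goldenRatio⁻¹ ^ k := by positivity
      calc (m:ℝ) * goldenRatio⁻¹ ^ k ≤ (N:ℝ) * goldenRatio⁻¹ ^ k :=
            mul_le_mul_of_nonneg_right hmN hp
        _ = δ * N := by rw [hδdef]; ring
    · intro t
      have hφ : (N:ℝ) * goldenRatio = (Nat.fib (k+1):ℝ) - goldenConj ^ k :=
        fib_mul_gold k
      have hdm : N * q + g m = m * Nat.fib (k+1) := Nat.div_add_mod _ N
      have hcast : (N:ℝ) * (q:ℝ) + (g m:ℝ) = (m:ℝ) * (Nat.fib (k+1):ℝ) := by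
        exact_mod_cast congrArg (Nat.cast : ℕ → ℝ) hdm
      have hNne : (N:ℝ) ≠ 0 := ne_of_gt hNpos
      have e1 : (m:ℝ) * goldenRatio - t
          = ((g m:ℝ)/(N:ℝ) - t + (-((m:ℝ) * goldenConj ^ k) / (N:ℝ))) + ((q:ℤ):ℝ) := by
        obtain ⟨A, hA⟩ : ∃ A, (goldenRatio:ℝ) = A := ⟨_, rfl⟩
        obtain ⟨B, hB⟩ : ∃ B, (goldenConj:ℝ) = B := ⟨_, rfl⟩
        rw [hA, hB] at hφ ⊢
        push_cast
        field_simp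
        linear_combination (m:ℝ) * hφ - hcast
      rw [e1, Int.fract_add_intCast]
  -- upper bound
  set x2 := if x - δ < 0 then x - δ + 1 else x - δ with hx2def
  have hx20 : 0 ≤ x2 := by
    rw [hx2def]; split_ifs with h
    · linarith
    · linarith
  have hx21 : x2 ≤ 1 := by
    rw [hx2def]; split_ifs with h
    · linarith
    · linarith
  have hshift2 : ∀ y : ℝ, Int.fract (y - x2) = Int.fract (y - x + δ) := by
    intro y
    rw [hx2def]
    split_ifs with h
    · rw [show y - (x - δ + 1) = (y - x + δ) - ((1:ℤ):ℝ) by push_cast; ring,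
        Int.fract_sub_intCast]
    · congr 1; ring
  have hSup : S ⊆ (Finset.range N).filter (fun m : ℕ =>
      (fun j : ℕ => Int.fract ((j:ℝ)/(N:ℝ) - x) ≤ ε + δ ∨
        Int.fract ((j:ℝ)/(N:ℝ) - x2) ≤ δ) (g m)) := by
    intro m hm
    rw [hSdef, Finset.mem_filter, Finset.mem_range] at hm
    obtain ⟨hmN, hmf⟩ := hm
    obtain ⟨η, hη, hfr⟩ := hkey m hmN
    rw [hfr x] at hmf
    rw [Finset.mem_filter, Finset.mem_range]
    refine ⟨hmN, ?_⟩
    rcases pert_upper hη (by linarith) hmf with h | h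
    · exact Or.inl h
    · right
      rw [hshift2]
      exact pert_wrap hδ1 h
  have hup : (S.card : ℝ) ≤ (N:ℝ) * ε + 4 := by
    have h3 := card_filter_comp N g hgmem hginj (fun j : ℕ =>
        Int.fract ((j:ℝ)/(N:ℝ) - x) ≤ ε + δ ∨ Int.fract ((j:ℝ)/(N:ℝ) - x2) ≤ δ)
    have h4 : ((Finset.range N).filter (fun j : ℕ =>
        Int.fract ((j:ℝ)/(N:ℝ) - x) ≤ ε + δ ∨
          Int.fract ((j:ℝ)/(N:ℝ) - x2) ≤ δ)).card
        ≤ ((Finset.range N).filter (fun j : ℕ =>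
            Int.fract ((j:ℝ)/(N:ℝ) - x) ≤ ε + δ)).card
          + ((Finset.range N).filter (fun j : ℕ =>
            Int.fract ((j:ℝ)/(N:ℝ) - x2) ≤ δ)).card := by
      rw [Finset.filter_or]
      exact Finset.card_union_le _ _
    have h7 : S.card ≤ ((Finset.range N).filter (fun j : ℕ =>
            Int.fract ((j:ℝ)/(N:ℝ) - x) ≤ ε + δ)).card
          + ((Finset.range N).filter (fun j : ℕ =>
            Int.fract ((j:ℝ)/(N:ℝ) - x2) ≤ δ)).card :=
      le_trans (le_trans (Finset.card_le_card hSup) (le_of_eq h3)) h4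
    have h8 : (S.card : ℝ) ≤ (((Finset.range N).filter (fun j : ℕ =>
            Int.fract ((j:ℝ)/(N:ℝ) - x) ≤ ε + δ)).card : ℝ)
          + (((Finset.range N).filter (fun j : ℕ =>
            Int.fract ((j:ℝ)/(N:ℝ) - x2) ≤ δ)).card : ℝ) := by
      exact_mod_cast h7
    have h5 := lat_upper N hN x (ε + δ) hx0 hx1 (by linarith)
    have h6 := lat_upper N hN x2 δ hx20 hx21 hδpos.le
    have he : (N:ℝ) * (ε + δ) = (N:ℝ)*ε + (N:ℝ)*δ := by ring
    linarith
  -- lower bound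
  have hlow : (N:ℝ) * ε - 4 ≤ (S.card : ℝ) := by
    have hc0 : (0:ℝ) ≤ (S.card:ℝ) := Nat.cast_nonneg _
    by_cases hεδ : ε < 2*δ
    · have h1 : (N:ℝ) * ε ≤ 2 := by nlinarith
      linarith
    push_neg at hεδ
    set x3 := if 1 < x + δ then x + δ - 1 else x + δ with hx3def
    have hx30 : 0 ≤ x3 := by
      rw [hx3def]; split_ifs with h
      · linarith
      · linarith
    have hx31 : x3 ≤ 1 := by
      rw [hx3def]; split_ifs with h
      · linarith
      · linarith
    have hshift3 : ∀ y : ℝ, Int.fract (y - x3) = Int.fract (y - x - δ) := by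
      intro y
      rw [hx3def]
      split_ifs with h
      · rw [show y - (x + δ - 1) = (y - x - δ) + ((1:ℤ):ℝ) by push_cast; ring,
          Int.fract_add_intCast]
      · congr 1; ring
    have hsub : (Finset.range N).filter (fun m : ℕ =>
        (fun j : ℕ => Int.fract ((j:ℝ)/(N:ℝ) - x3) ≤ ε - 2*δ) (g m)) ⊆ S := by
      intro m hm
      rw [Finset.mem_filter, Finset.mem_range] at hm
      obtain ⟨hmN, hmf⟩ := hm
      obtain ⟨η, hη, hfr⟩ := hkey m hmN
      rw [hSdef, Finset.mem_filter, Finset.mem_range]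
      refine ⟨hmN, ?_⟩
      rw [hfr x]
      rw [hshift3] at hmf
      exact pert_lower hη hεδ hmf
    have h3 := card_filter_comp N g hgmem hginj (fun j : ℕ =>
        Int.fract ((j:ℝ)/(N:ℝ) - x3) ≤ ε - 2*δ)
    have h7 : ((Finset.range N).filter (fun j : ℕ =>
        Int.fract ((j:ℝ)/(N:ℝ) - x3) ≤ ε - 2*δ)).card ≤ S.card := by
      rw [← h3]
      exact Finset.card_le_card hsub
    have h8 : (((Finset.range N).filter (fun j : ℕ =>
        Int.fract ((j:ℝ)/(N:ℝ) - x3) ≤ ε - 2*δ)).card : ℝ) ≤ (S.card:ℝ) := by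
      exact_mod_cast h7
    have h5 := lat_lower N hN x3 (ε - 2*δ) hx30 hx31 (by linarith) (by linarith)
    have he : (N:ℝ) * (ε - 2*δ) = (N:ℝ)*ε - 2*((N:ℝ)*δ) := by ring
    linarith
  rw [abs_le]
  constructor
  · linarith
  · linarith
end

section
/- For the van der Corput sequence in base 2 with 2^k − 1 points sorted as 0 = x'_0 < ... < x'_{2^k−1} < 1: each x'_s equals s written in binary with digits reversed and placed after the radix point. Consequently, if x'_l has inverse binary expansion A0C and x'_m has inverse binary expansion B1C (A, B of equal length, C a common suffix), then the integer whose radical inverse is the midpoint of [x'_l, x'_l + 2^{-k}] is smaller than the integer whose radical inverse is the midpoint of [x'_m, x'_m + 2^{-k}]. -/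
/-- Bit reversal of the lowest `k` bits. -/
def vdcRev : ℕ → ℕ → ℕ
  | 0, _ => 0
  | k+1, m => Nat.bit (m.testBit k) (vdcRev k m)

lemma vdcRev_lt (k m : ℕ) : vdcRev k m < 2 ^ k := by
  induction k with
  | zero => simp [vdcRev]
  | succ k ih =>
    show Nat.bit (m.testBit k) (vdcRev k m) < 2 ^ (k+1)
    cases m.testBit k <;> simp [Nat.bit] <;> omega

lemma testBit_vdcRev (k m : ℕ) : ∀ i < k, (vdcRev k m).testBit i = m.testBit (k - 1 - i) := by
  induction k with
  | zero => omega
  | succ k ih =>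
    intro i hi
    cases i with
    | zero =>
      show (Nat.bit (m.testBit k) (vdcRev k m)).testBit 0 = _
      rw [Nat.testBit_bit_zero]
      norm_num
    | succ i =>
      show (Nat.bit (m.testBit k) (vdcRev k m)).testBit (i+1) = _
      rw [Nat.testBit_bit_succ, ih i (by omega)]
      congr 1; omega

lemma vdcRev_eq_sum (k m : ℕ) :
    vdcRev k m = ∑ j ∈ Finset.range k, if m.testBit j then 2 ^ (k - 1 - j) else 0 := by
  induction k with
  | zero => simp [vdcRev]
  | succ k ih =>
    rw [Finset.sum_range_succ]
    have h1 : ∑ j ∈ Finset.range k, (if m.testBit j then 2 ^ (k + 1 - 1 - j) else 0)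
        = 2 * ∑ j ∈ Finset.range k, (if m.testBit j then 2 ^ (k - 1 - j) else 0) := by
      rw [Finset.mul_sum]
      refine Finset.sum_congr rfl fun j hj => ?_
      have hjk : j < k := Finset.mem_range.mp hj
      have he : k + 1 - 1 - j = (k - 1 - j) + 1 := by omega
      rw [he]; split <;> ring
    rw [h1, ← ih]
    show Nat.bit (m.testBit k) (vdcRev k m) = _
    cases m.testBit k <;> simp [Nat.bit] <;> omega

lemma vdc_eq_vdcRev (k m : ℕ) (hm : m < 2 ^ k) : vdc m = (vdcRev k m : ℝ) / 2 ^ k := by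
  have key : ∀ j, m.testBit j = true → j < m ∧ j < k := by
    intro j hj
    have h2 : 2 ^ j ≤ m := Nat.ge_two_pow_of_testBit hj
    have h3 := Nat.lt_two_pow_self (n := j)
    refine ⟨by omega, ?_⟩
    by_contra h
    have : 2 ^ k ≤ 2 ^ j := Nat.pow_le_pow_right (by norm_num) (by omega)
    omega
  have hL : vdc m = ∑ j ∈ Finset.range (max m k),
      (if m.testBit j then (1:ℝ)/2^(j+1) else 0) := by
    refine Finset.sum_subset (Finset.range_subset_range.mpr (le_max_left _ _)) ?_
    intro j _ hj
    rw [Finset.mem_range] at hj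
    cases hb : m.testBit j with
    | false => simp
    | true => exact absurd (key j hb).1 (by omega)
  have hR : ((vdcRev k m : ℝ)) / 2 ^ k = ∑ j ∈ Finset.range (max m k),
      (if m.testBit j then (1:ℝ)/2^(j+1) else 0) := by
    have hcast : (vdcRev k m : ℝ) = ∑ j ∈ Finset.range (max m k),
        (if m.testBit j then (2:ℝ)^(k-1-j) else 0) := by
      rw [vdcRev_eq_sum]
      push_cast
      refine Finset.sum_subset (Finset.range_subset_range.mpr (le_max_right _ _)) ?_
      intro j _ hj
      rw [Finset.mem_range] at hj
      cases hb : m.testBit j with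
      | false => simp
      | true => exact absurd (key j hb).2 (by omega)
    rw [hcast, Finset.sum_div]
    refine Finset.sum_congr rfl fun j _ => ?_
    cases hb : m.testBit j with
    | false => simp
    | true =>
      simp only [if_true]
      have hjk := (key j hb).2
      have hpow : (2:ℝ) ^ k = 2 ^ (k-1-j) * 2 ^ (j+1) := by
        rw [← pow_add]; congr 1; omega
      rw [hpow]
      rw [div_eq_div_iff (by positivity) (by positivity)]
      ring
  rw [hL, ← hR]

/-- For `2^k - 1` points sorted as `0 = x'_0 < ... < x'_{2^k-1} < 1`:
each `x'_s` equals `s / 2^k`, i.e. `s` written in binary with digits reversed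
after the radix point.  Moreover, if the inverse binary expansion of `x'_l` is
`A0C` and that of `x'_m` is `B1C` (`A`, `B` of equal length, `C` a common
suffix — equivalently, there is a bit position `p` where `l` has a `0` and
`m` has a `1` while all lower-order bits of `l` and `m` agree), then the
integer `u` whose radical inverse is the midpoint of `[x'_l, x'_l + 2^{-k}]`
is smaller than the integer `v` whose radical inverse is the midpoint of
`[x'_m, x'_m + 2^{-k}]`. -/
theorem stmt_13 (k : ℕ) (hk : 1 ≤ k) (x' : ℕ → ℝ)
    (hx0 : x' 0 = 0)
    (hmono : ∀ i j, i < j → j ≤ 2 ^ k - 1 → x' i < x' j)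
    (hlt1 : x' (2 ^ k - 1) < 1)
    (himg : ∀ y : ℝ, (∃ i, i ≤ 2 ^ k - 1 ∧ x' i = y) ↔
      (y = 0 ∨ ∃ m, 1 ≤ m ∧ m ≤ 2 ^ k - 1 ∧ vdc m = y)) :
    (∀ s ≤ 2 ^ k - 1, x' s = (s : ℝ) / 2 ^ k) ∧
      (∀ l m : ℕ, l < 2 ^ k → m < 2 ^ k →
        (∃ p < k, l.testBit p = false ∧ m.testBit p = true ∧
          ∀ q < p, l.testBit q = m.testBit q) →
        ∀ u v : ℕ, 2 ^ k ≤ u → u < 2 ^ (k + 1) → 2 ^ k ≤ v → v < 2 ^ (k + 1) →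
          vdc u = x' l + 1 / 2 ^ (k + 1) → vdc v = x' m + 1 / 2 ^ (k + 1) →
          u < v) := by
  have hN : 1 ≤ 2 ^ k := Nat.one_le_two_pow
  have hpos : (0:ℝ) < 2 ^ k := by positivity
  have part1 : ∀ s ≤ 2 ^ k - 1, x' s = (s : ℝ) / 2 ^ k := by
    have hcard : ((Finset.range (2^k)).image (fun i : ℕ => (i : ℝ) / 2 ^ k)).card = 2 ^ k := by
      have hinj : Function.Injective (fun i : ℕ => (i : ℝ) / 2 ^ k) := by
        intro a b hab
        field_simp at hab
        exact_mod_cast hab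
      rw [Finset.card_image_of_injective _ hinj, Finset.card_range]
    have hgS : ∀ i : Fin (2^k), (fun i : Fin (2^k) => (i : ℝ) / 2 ^ k) i ∈
        (Finset.range (2^k)).image (fun i : ℕ => (i : ℝ) / 2 ^ k) := fun i =>
      Finset.mem_image.mpr ⟨i, Finset.mem_range.mpr i.isLt, rfl⟩
    have hgmono : StrictMono (fun i : Fin (2^k) => (i : ℝ) / 2 ^ k) := by
      intro a b hab
      have : (a:ℝ) < b := by exact_mod_cast hab
      exact div_lt_div_of_pos_right this hpos
    have hxS : ∀ i : Fin (2^k), (fun i : Fin (2^k) => x' i) i ∈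
        (Finset.range (2^k)).image (fun i : ℕ => (i : ℝ) / 2 ^ k) := by
      intro i
      have hi := i.isLt
      rcases (himg (x' i)).mp ⟨i, by omega, rfl⟩ with h0 | ⟨m, hm1, hm2, hm3⟩
      · simp only [h0]
        exact Finset.mem_image.mpr ⟨0, Finset.mem_range.mpr (by omega), by simp⟩
      · simp only [← hm3, vdc_eq_vdcRev k m (by omega)]
        exact Finset.mem_image.mpr ⟨vdcRev k m, Finset.mem_range.mpr (vdcRev_lt k m), rfl⟩
    have hxmono : StrictMono (fun i : Fin (2^k) => x' i) := by
      intro a b hab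
      have := b.isLt
      exact hmono a b hab (by omega)
    have h1 := Finset.orderEmbOfFin_unique hcard hxS hxmono
    have h2 := Finset.orderEmbOfFin_unique hcard hgS hgmono
    intro s hs
    exact congrFun (h1.trans h2.symm) ⟨s, by omega⟩
  refine ⟨part1, ?_⟩
  rintro l m hl hm ⟨p, hp, hlp, hmp, hq⟩ u v hu1 hu2 hv1 hv2 hvu hvv
  have hxl := part1 l (by omega)
  have hxm := part1 m (by omega)
  have hb : ∀ n : ℕ, Nat.bit true n = 2*n+1 := fun n => by simp [Nat.bit]
  have hbit0 : ∀ n : ℕ, (2*n+1).testBit 0 = true := by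
    intro n; rw [← hb]; exact Nat.testBit_bit_zero ..
  have hbitS : ∀ n i : ℕ, (2*n+1).testBit (i+1) = n.testBit i := by
    intro n i; rw [← hb]; exact Nat.testBit_bit_succ ..
  -- determine u and v
  have key : ∀ (w n : ℕ), w < 2 ^ (k+1) → n < 2 ^ k →
      vdc w = (n : ℝ) / 2 ^ k + 1 / 2 ^ (k + 1) → vdcRev (k+1) w = 2 * n + 1 := by
    intro w n hw hn hvw
    rw [vdc_eq_vdcRev (k+1) w hw] at hvw
    have hr : (vdcRev (k+1) w : ℝ) = 2 * n + 1 := by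
      have h3 : (vdcRev (k+1) w : ℝ) = ((n:ℝ)/2^k + 1/2^(k+1)) * 2^(k+1) := by
        rw [← hvw]; field_simp
      rw [h3, pow_succ]
      field_simp
    exact_mod_cast hr
  have hueq : vdcRev (k+1) u = 2 * l + 1 := key u l hu2 hl (by rw [← hxl]; exact hvu)
  have hveq : vdcRev (k+1) v = 2 * m + 1 := key v m hv2 hm (by rw [← hxm]; exact hvv)
  have hubit : ∀ j ≤ k, u.testBit j = (2*l+1).testBit (k - j) := by
    intro j hj
    have h := testBit_vdcRev (k+1) u (k - j) (by omega)
    rw [hueq] at h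
    have hidx : k + 1 - 1 - (k - j) = j := by omega
    rw [hidx] at h
    exact h.symm
  have hvbit : ∀ j ≤ k, v.testBit j = (2*m+1).testBit (k - j) := by
    intro j hj
    have h := testBit_vdcRev (k+1) v (k - j) (by omega)
    rw [hveq] at h
    have hidx : k + 1 - 1 - (k - j) = j := by omega
    rw [hidx] at h
    exact h.symm
  refine Nat.lt_of_testBit (k - 1 - p) ?_ ?_ ?_
  · rw [hubit (k-1-p) (by omega)]
    have : k - (k - 1 - p) = p + 1 := by omega
    rw [this, hbitS]
    exact hlp
  · rw [hvbit (k-1-p) (by omega)]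
    have : k - (k - 1 - p) = p + 1 := by omega
    rw [this, hbitS]
    exact hmp
  · intro j hj
    rcases lt_or_ge j (k+1) with hjk | hjk
    · rcases Nat.lt_or_ge j k with hjk' | hjk'
      · -- k - 1 - p < j < k
        have hkj : k - j = (k - 1 - j) + 1 := by omega
        rw [hubit j (by omega), hvbit j (by omega), hkj, hbitS, hbitS]
        exact hq (k - 1 - j) (by omega)
      · -- j = k
        rw [hubit j (by omega), hvbit j (by omega)]
        have hkj : k - j = 0 := by omega
        rw [hkj, hbit0, hbit0]
    · -- j ≥ k + 1
      have h2j : 2 ^ (k+1) ≤ 2 ^ j := Nat.pow_le_pow_right (by norm_num) hjk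
      rw [Nat.testBit_lt_two_pow (by omega), Nat.testBit_lt_two_pow (by omega)]
end

section
/- There exists a constant c > 0 such that: for all integers r ≥ 2 there exists N such that for all n ≥ N and all x with 0 ≤ x ≤ 1 − r/n, the number of m with 1 ≤ m ≤ n and x ≤ x_m ≤ x + r/n differs from r by at most c·log(r), where (x_m) is the van der Corput sequence in base 2. -/
namespace VdcAux


def rev : ℕ → ℕ → ℕ
  | 0, _ => 0
  | k+1, u => 2 * rev k u + (if u.testBit k then 1 else 0)

lemma rev_succ (k u : ℕ) : rev (k+1) u = 2 * rev k u + (if u.testBit k then 1 else 0) := rfl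

lemma rev_lt (k u : ℕ) : rev k u < 2^k := by
  induction k with
  | zero => simp [rev]
  | succ k ih =>
    rw [rev_succ, pow_succ]
    split <;> omega

lemma rev_congr {k : ℕ} {u v : ℕ} (h : ∀ j < k, u.testBit j = v.testBit j) :
    rev k u = rev k v := by
  induction k with
  | zero => rfl
  | succ k ih =>
    rw [rev_succ, rev_succ, ih (fun j hj => h j (by omega)), h k (by omega)]

lemma rev_mod (k u : ℕ) : rev k (u % 2^k) = rev k u := by
  apply rev_congr
  intro j hj
  simp [Nat.testBit_mod_two_pow, hj]

lemma rev_inj {k u v : ℕ} (hu : u < 2^k) (hv : v < 2^k) (h : rev k u = rev k v) : u = v := by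
  induction k generalizing u v with
  | zero => omega
  | succ k ih =>
    rw [rev_succ, rev_succ] at h
    have hru := rev_lt k u
    have hrv := rev_lt k v
    have h1 : rev k u = rev k v ∧ u.testBit k = v.testBit k := by
      by_cases hb : u.testBit k <;> by_cases hb' : v.testBit k <;>
        simp [hb, hb'] at h ⊢ <;> omega
    have h2 : u % 2^k = v % 2^k := by
      apply ih (Nat.mod_lt _ (by positivity)) (Nat.mod_lt _ (by positivity))
      rw [rev_mod, rev_mod, h1.1]
    have hu2 : u / 2^k < 2 := (Nat.div_lt_iff_lt_mul (by positivity)).mpr (by rw [pow_succ] at hu; omega)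
    have hv2 : v / 2^k < 2 := (Nat.div_lt_iff_lt_mul (by positivity)).mpr (by rw [pow_succ] at hv; omega)
    have h4 : (u / 2^k % 2 = 1) ↔ (v / 2^k % 2 = 1) := by
      have := h1.2
      rw [Nat.testBit_eq_decide_div_mod_eq, Nat.testBit_eq_decide_div_mod_eq] at this
      simpa using this
    have h4' : u / 2^k % 2 = v / 2^k % 2 := by
      by_cases hc : u / 2^k % 2 = 1
      · rw [hc, (h4.mp hc)]
      · have hc' : ¬ (v / 2^k % 2 = 1) := fun hw => hc (h4.mpr hw)
        omega
    have hq : u / 2^k = v / 2^k := by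
      revert hu2 hv2 h4'
      generalize u / 2 ^ k = qu
      generalize v / 2 ^ k = qv
      omega
    calc u = 2^k * (u / 2^k) + u % 2^k := (Nat.div_add_mod u _).symm
    _ = 2^k * (v / 2^k) + v % 2^k := by rw [hq, h2]
    _ = v := Nat.div_add_mod v _

lemma rev_surj {k a : ℕ} (ha : a < 2^k) : ∃ c, c < 2^k ∧ rev k c = a := by
  have himg : (Finset.range (2^k)).image (rev k) = Finset.range (2^k) := by
    apply Finset.eq_of_subset_of_card_le
    · intro b hb
      simp only [Finset.mem_image, Finset.mem_range] at hb ⊢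
      obtain ⟨c, _, rfl⟩ := hb
      exact rev_lt k c
    · rw [Finset.card_image_of_injOn, Finset.card_range]
      intro u hu v hv h
      exact rev_inj (Finset.mem_range.mp hu) (Finset.mem_range.mp hv) h
  have : a ∈ (Finset.range (2^k)).image (rev k) := by rw [himg]; exact Finset.mem_range.mpr ha
  simpa [Finset.mem_image, Finset.mem_range, and_comm] using this

lemma rev_split (i K m : ℕ) (h : i ≤ K) :
    ∃ s, s < 2^i ∧ rev K m = 2^i * rev (K - i) m + s := by
  induction i with
  | zero => exact ⟨0, by norm_num, by simp⟩
  | succ i ih =>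
    obtain ⟨s, hs, hrev⟩ := ih (by omega)
    have hKi : K - i = (K - (i+1)) + 1 := by omega
    rw [hKi, rev_succ] at hrev
    refine ⟨2^i * (if m.testBit (K - (i+1)) then 1 else 0) + s, ?_, ?_⟩
    · split <;> [skip; skip] <;> simp [pow_succ] <;> omega
    · rw [hrev]; ring

lemma sum_eq_rev (k m : ℕ) :
    ∑ j ∈ Finset.range k, (if m.testBit j then (1:ℝ)/2^(j+1) else 0) = rev k m / 2^k := by
  induction k with
  | zero => simp [rev]
  | succ k ih =>
    rw [Finset.sum_range_succ, ih, rev_succ]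
    push_cast
    split <;> [skip; skip] <;> rw [pow_succ] <;> field_simp <;> ring

lemma vdc_eq_sum (K m : ℕ) (h : m < 2^K) :
    vdc m = ∑ j ∈ Finset.range K, (if m.testBit j then (1:ℝ)/2^(j+1) else 0) := by
  have key : ∀ (k : ℕ), k ≤ max m K → (m < 2^k ∨ m ≤ k) →
      ∑ j ∈ Finset.range k, (if m.testBit j then (1:ℝ)/2^(j+1) else 0)
      = ∑ j ∈ Finset.range (max m K), (if m.testBit j then (1:ℝ)/2^(j+1) else 0) := by
    intro k hk hcond
    apply Finset.sum_subset (Finset.range_subset_range.mpr hk)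
    intro j _ hj
    rw [Finset.mem_range, not_lt] at hj
    have hbit : m.testBit j = false := by
      apply Nat.testBit_lt_two_pow
      rcases hcond with h' | h'
      · exact lt_of_lt_of_le h' (Nat.pow_le_pow_right (by norm_num) hj)
      · exact lt_of_lt_of_le (Nat.lt_two_pow_self (n := m)) (Nat.pow_le_pow_right (by norm_num) (by omega))
    rw [hbit]
    simp
  rw [vdc, key m (le_max_left _ _) (Or.inr le_rfl), key K (le_max_right _ _) (Or.inl h)]

lemma vdc_eq_rev {K m : ℕ} (h : m < 2^K) : vdc m = rev K m / 2^K := by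
  rw [vdc_eq_sum K m h, sum_eq_rev]

def Cnt (R : ℕ → ℕ) (n a b : ℕ) : ℕ :=
  ((Finset.Icc 1 n).filter (fun m => a ≤ R m ∧ R m < b)).card

lemma cnt_add (R : ℕ → ℕ) (n : ℕ) {a b c : ℕ} (hab : a ≤ b) (hbc : b ≤ c) :
    Cnt R n a c = Cnt R n a b + Cnt R n b c := by
  unfold Cnt
  rw [← Finset.card_union_of_disjoint]
  · congr 1
    ext m
    simp only [Finset.mem_union, Finset.mem_filter, Finset.mem_Icc]
    constructor
    · rintro ⟨hm, h1, h2⟩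
      by_cases hb : R m < b
      · exact Or.inl ⟨hm, h1, hb⟩
      · exact Or.inr ⟨hm, by omega, h2⟩
    · rintro (⟨hm, h1, h2⟩ | ⟨hm, h1, h2⟩) <;> exact ⟨hm, by omega, by omega⟩
  · rw [Finset.disjoint_left]
    intro m hm hm'
    simp only [Finset.mem_filter] at hm hm'
    omega

lemma residue_count {q : ℕ} (hq : 0 < q) (c : ℕ) (hc : c < q) (n : ℕ) :
    |(((Finset.Icc 1 n).filter (fun m => m % q = c)).card : ℝ) - n / q| ≤ 1 := by
  have hq' : (0:ℝ) < q := by exact_mod_cast hq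
  rcases Nat.eq_zero_or_pos c with rfl | hc1
  · have hcard : ((Finset.Icc 1 n).filter (fun m => m % q = 0)).card = n / q := by
      rw [← Nat.Ioc_filter_dvd_card_eq_div n q]
      congr 1
      ext m
      simp only [Finset.mem_filter, Finset.mem_Icc, Finset.mem_Ioc, Nat.dvd_iff_mod_eq_zero]
      omega
    rw [hcard]
    have h2 := Nat.div_add_mod n q
    have h3 : n % q < q := Nat.mod_lt _ hq
    have hub : (↑(n/q) : ℝ) * q ≤ n := by
      have : n / q * q ≤ n := Nat.div_mul_le_self n q
      exact_mod_cast this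
    have hlb : (n:ℝ) ≤ (↑(n/q) + 1) * q := by
      have : n ≤ (n / q + 1) * q := by
        have hcm : n / q * q = q * (n / q) := Nat.mul_comm _ _
        have hcm2 : (n / q + 1) * q = q * (n / q) + q := by ring
        omega
      exact_mod_cast this
    rw [abs_le]
    constructor
    · have : (n:ℝ)/q ≤ ↑(n/q) + 1 := (div_le_iff₀ hq').mpr hlb
      linarith
    · have : (↑(n/q):ℝ) ≤ n/q := (le_div_iff₀ hq').mpr hub
      linarith
  · rcases le_or_gt c n with hcn | hcn
    · have himg : (Finset.Icc 1 n).filter (fun m => m % q = c)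
          = (Finset.range ((n - c)/q + 1)).image (fun t => q * t + c) := by
        ext m
        simp only [Finset.mem_filter, Finset.mem_Icc, Finset.mem_image, Finset.mem_range,
          Nat.lt_succ_iff]
        constructor
        · rintro ⟨⟨hm1, hm2⟩, hmc⟩
          have hdm := Nat.div_add_mod m q
          refine ⟨m / q, ?_, by omega⟩
          apply Nat.le_div_iff_mul_le hq |>.mpr
          have hcm : m / q * q = q * (m / q) := Nat.mul_comm _ _
          omega
        · rintro ⟨t, ht, rfl⟩
          have h1 : q * t ≤ n - c := by
            calc q * t = t * q := Nat.mul_comm _ _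
            _ ≤ (n - c) / q * q := Nat.mul_le_mul_right _ ht
            _ ≤ n - c := Nat.div_mul_le_self _ _
          refine ⟨⟨by omega, by omega⟩, ?_⟩
          rw [Nat.mul_add_mod]
          exact Nat.mod_eq_of_lt hc
      rw [himg, Finset.card_image_of_injective _ (fun a b hab => Nat.eq_of_mul_eq_mul_left hq (by omega)), Finset.card_range]
      have hA : q * ((n - c)/q) + c ≤ n := by
        have : q * ((n - c)/q) ≤ n - c := by
          have := Nat.div_mul_le_self (n - c) q
          have hcm : (n - c) / q * q = q * ((n - c)/q) := Nat.mul_comm _ _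
          omega
        omega
      have hB : n < q * ((n - c)/q) + q + c := by
        have h2 := Nat.div_add_mod (n - c) q
        have h3 : (n - c) % q < q := Nat.mod_lt _ hq
        omega
      have hA' : (q:ℝ) * ↑((n - c)/q) + c ≤ n := by exact_mod_cast hA
      have hB' : (n:ℝ) < q * ↑((n - c)/q) + q + c := by exact_mod_cast hB
      have hcq : (c:ℝ) ≤ q - 1 := by
        have : (c:ℝ) + 1 ≤ q := by exact_mod_cast hc
        linarith
      have hc1' : (1:ℝ) ≤ c := by exact_mod_cast hc1
      have hub : (↑((n - c)/q) : ℝ) * q ≤ n := by nlinarith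
      have hlb : (n:ℝ) ≤ (↑((n - c)/q) + 2) * q := by nlinarith
      rw [abs_le]
      push_cast
      constructor
      · have : (n:ℝ)/q ≤ ↑((n - c)/q) + 2 := (div_le_iff₀ hq').mpr hlb
        linarith
      · have : (↑((n - c)/q):ℝ) ≤ n/q := (le_div_iff₀ hq').mpr hub
        linarith
    · have hempty : (Finset.Icc 1 n).filter (fun m => m % q = c) = ∅ := by
        ext m
        simp only [Finset.mem_filter, Finset.mem_Icc, Finset.notMem_empty, iff_false]
        rintro ⟨⟨hm1, hm2⟩, hmc⟩
        have := Nat.mod_le m q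
        omega
      rw [hempty]
      simp only [Finset.card_empty, Nat.cast_zero, zero_sub, abs_neg]
      rw [abs_of_nonneg (by positivity), div_le_one hq']
      have h1 : (n:ℝ) < c := by exact_mod_cast hcn
      have h2 : (c:ℝ) < q := by exact_mod_cast hc
      linarith


lemma dyadic (n K i t : ℕ) (hi : i ≤ K) (ht : 2^i ∣ t) (hb : t + 2^i ≤ 2^K) :
    |(Cnt (rev K) n t (t + 2^i) : ℝ) - n / 2^(K-i)| ≤ 1 := by
  obtain ⟨u, hu⟩ := ht
  have hpow : (2:ℕ)^K = 2^(K-i) * 2^i := by rw [← pow_add]; congr 1; omega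
  have hu2 : u < 2^(K-i) := by
    have h1 : 2^i * (u+1) ≤ 2^(K-i) * 2^i := by
      rw [← hpow, Nat.mul_add, Nat.mul_one]; omega
    have h2 : 2^i * (u+1) = (u+1) * 2^i := Nat.mul_comm _ _
    have := Nat.le_of_mul_le_mul_right (h2 ▸ h1) (Nat.two_pow_pos i)
    omega
  obtain ⟨c, hck, hcrev⟩ := rev_surj hu2
  have hcond : ∀ m, ((t ≤ rev K m ∧ rev K m < t + 2^i) ↔ m % 2^(K-i) = c) := by
    intro m
    obtain ⟨s, hs, hsplit⟩ := rev_split i K m hi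
    constructor
    · rintro ⟨h1, h2⟩
      have hmu : rev (K-i) m = u := by
        have hlt : rev (K-i) m < u + 1 := by
          apply Nat.lt_of_mul_lt_mul_left (a := 2^i)
          have h3 : 2^i * (u+1) = 2^i * u + 2^i := by ring
          omega
        have hge : u < rev (K-i) m + 1 := by
          apply Nat.lt_of_mul_lt_mul_left (a := 2^i)
          have h4 : 2^i * (rev (K-i) m + 1) = 2^i * rev (K-i) m + 2^i := by ring
          omega
        omega
      apply rev_inj (Nat.mod_lt _ (by positivity)) hck
      rw [rev_mod, hmu, hcrev]
    · intro hm
      have h5 : rev (K-i) m = u := by rw [← rev_mod, hm, hcrev]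
      rw [hsplit, h5, hu]
      omega
  have hcnt : Cnt (rev K) n t (t + 2^i)
      = ((Finset.Icc 1 n).filter (fun m => m % 2^(K-i) = c)).card := by
    unfold Cnt
    congr 1
    apply Finset.filter_congr
    intro m _
    simp [hcond m]
  rw [hcnt]
  have hres := residue_count (q := 2^(K-i)) (by positivity) c hck n
  exact_mod_cast hres

lemma cnt_self (R : ℕ → ℕ) (n t : ℕ) : Cnt R n t t = 0 := by
  unfold Cnt
  rw [Finset.card_eq_zero]
  ext m
  simp only [Finset.mem_filter, Finset.notMem_empty, iff_false]
  rintro ⟨_, h1, h2⟩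
  omega

lemma pow_sub_real (n K j : ℕ) (hj : j ≤ K) : (n:ℝ) / 2^(K-j) = n * 2^j / 2^K := by
  have h : (2:ℝ)^(K-j) * 2^j = 2^K := by rw [← pow_add]; congr 1; omega
  rw [div_eq_div_iff (by positivity) (by positivity), ← h]
  ring

lemma main_count (n K : ℕ) : ∀ L t a, L ≤ K → 2^L ∣ t → a ≤ 2^(L+1) → t + a ≤ 2^K →
    |(Cnt (rev K) n t (t + a) : ℝ) - n * a / 2^K| ≤ (L:ℝ) + 2 := by
  intro L
  induction L with
  | zero =>
    intro t a _ _ ha hta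
    have hd1 : ∀ t', t' + 1 ≤ 2^K → |(Cnt (rev K) n t' (t' + 1) : ℝ) - n / 2^K| ≤ 1 := by
      intro t' h
      have := dyadic n K 0 t' (by omega) (one_dvd _) (by simpa using h)
      simpa using this
    interval_cases a
    · simp [cnt_self]
    · have h := hd1 t hta
      have e : (n:ℝ) * (1:ℕ) / 2^K = n / 2^K := by push_cast; ring
      push_cast at e ⊢
      rw [e]
      linarith [h]
    · have e1 : Cnt (rev K) n t (t + 2) = Cnt (rev K) n t (t+1) + Cnt (rev K) n (t+1) (t+1+1) := by
        have := cnt_add (rev K) n (show t ≤ t+1 by omega) (show t+1 ≤ t+2 by omega)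
        rw [this]
      have h1 := hd1 t (by omega)
      have h2 := hd1 (t+1) (by omega)
      have e2 : (n:ℝ) * 2 / 2^K = n/2^K + n/2^K := by ring
      rw [e1]
      push_cast
      rw [e2, abs_le] at *
      constructor <;> linarith [h1.1, h1.2, h2.1, h2.2]
  | succ L ih =>
    intro t a hLK ht ha hta
    by_cases hsmall : a ≤ 2^(L+1)
    · have := ih t a (by omega) (dvd_trans (pow_dvd_pow 2 (by omega)) ht) hsmall hta
      push_cast at this ⊢
      linarith [this]
    · push_neg at hsmall
      obtain ⟨a', rfl⟩ : ∃ a', a = 2^(L+1) + a' := ⟨a - 2^(L+1), by omega⟩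
      have ha'le : a' ≤ 2^(L+1) := by
        have hp : (2:ℕ)^(L+1+1) = 2 * 2^(L+1) := by rw [pow_succ]; ring
        omega
      have hsplitc : Cnt (rev K) n t (t + (2^(L+1) + a'))
          = Cnt (rev K) n t (t + 2^(L+1)) + Cnt (rev K) n (t + 2^(L+1)) (t + 2^(L+1) + a') := by
        have harg : t + (2^(L+1) + a') = t + 2^(L+1) + a' := by omega
        rw [harg, cnt_add (rev K) n (show t ≤ t + 2^(L+1) by omega)
          (show t + 2^(L+1) ≤ t + 2^(L+1) + a' by omega)]
      have h1 := dyadic n K (L+1) t hLK ht (by omega)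
      have h2 := ih (t + 2^(L+1)) a' (by omega)
          (dvd_add (dvd_trans (pow_dvd_pow 2 (by omega)) ht) (pow_dvd_pow 2 (by omega)))
          ha'le (by omega)
      rw [pow_sub_real n K (L+1) hLK] at h1
      rw [hsplitc]
      have e : (n:ℝ) * (2^(L+1) + (a':ℝ)) / 2^K = n * 2^(L+1)/2^K + n * a'/2^K := by ring
      push_cast at h1 h2 ⊢
      rw [e, abs_le] at *
      constructor <;> linarith [h1.1, h1.2, h2.1, h2.2]

end VdcAux

open VdcAux

set_option maxHeartbeats 1000000 in
theorem stmt_14 :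
    ∃ c : ℝ, 0 < c ∧ ∀ r : ℕ, 2 ≤ r → ∃ N : ℕ, ∀ n : ℕ, N ≤ n →
      ∀ x : ℝ, 0 ≤ x → x ≤ 1 - (r : ℝ) / n →
        |(({m : ℕ | 1 ≤ m ∧ m ≤ n ∧ x ≤ vdc m ∧ vdc m ≤ x + (r : ℝ) / n}.ncard : ℝ))
            - (r : ℝ)| ≤ c * Real.log r := by
  refine ⟨30, by norm_num, ?_⟩
  intro r hr
  refine ⟨2^(Nat.log 2 r + 3), ?_⟩
  intro n hn x hx hx'
  set L := Nat.log 2 r + 3 with hL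
  have hn1 : 1 ≤ n := le_trans (Nat.one_le_two_pow) hn
  have hn0 : (0:ℝ) < n := by exact_mod_cast hn1
  have hr0 : (0:ℝ) < r := by
    have : (2:ℝ) ≤ r := by exact_mod_cast hr
    linarith
  have hrn : (r:ℝ)/n ≤ 1 := by linarith
  have hrn0 : (0:ℝ) ≤ (r:ℝ)/n := by positivity
  have hx1 : x ≤ 1 := by linarith
  set K := Nat.log 2 n + 1 with hK
  have hnK : n < 2^K := Nat.lt_pow_succ_log_self (by norm_num) n
  have h2K : 2^K ≤ 2*n := by
    rw [hK, pow_succ]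
    have := Nat.pow_log_le_self 2 (show n ≠ 0 by omega)
    omega
  have hLK : L ≤ K := by
    have h1 : (2:ℕ)^L < 2^K := lt_of_le_of_lt hn hnK
    exact le_of_lt ((Nat.pow_lt_pow_iff_right (by norm_num)).mp h1)
  have h2K0 : (0:ℝ) < 2^K := by positivity
  set b1 := ⌈x * 2^K⌉₊ with hb1
  set fl := ⌊(x + (r:ℝ)/n) * 2^K⌋₊ with hfl
  set b2 := min (fl + 1) (2^K) with hb2
  have hx2K : (0:ℝ) ≤ x * 2^K := by positivity
  have hy2K : (0:ℝ) ≤ (x + (r:ℝ)/n) * 2^K := by positivity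
  have hb1le : x * 2^K ≤ (b1:ℝ) := Nat.le_ceil _
  have hb1lt : (b1:ℝ) < x * 2^K + 1 := Nat.ceil_lt_add_one hx2K
  have hfl_le : (fl:ℝ) ≤ (x + (r:ℝ)/n) * 2^K := Nat.floor_le hy2K
  have hfl_lt : (x + (r:ℝ)/n) * 2^K < (fl:ℝ) + 1 := Nat.lt_floor_add_one _
  have hy_le : (x + (r:ℝ)/n) * 2^K ≤ 2^K := by
    have := mul_le_mul_of_nonneg_right (show x + (r:ℝ)/n ≤ 1 by linarith) h2K0.le
    simpa using this
  have hb2up : (b2:ℝ) ≤ (x + (r:ℝ)/n)*2^K + 1 := by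
    have h1 : b2 ≤ fl + 1 := min_le_left _ _
    have h2 : (b2:ℝ) ≤ (fl:ℝ) + 1 := by exact_mod_cast h1
    linarith
  have hb2lo : (x + (r:ℝ)/n)*2^K - 1 < (b2:ℝ) := by
    rcases le_total (fl+1) (2^K) with hmin | hmin
    · have he : b2 = fl + 1 := min_eq_left hmin
      rw [he]
      push_cast
      linarith
    · have he : b2 = 2^K := min_eq_right hmin
      rw [he]
      push_cast
      linarith
  have hb2K : b2 ≤ 2^K := min_le_right _ _
  have hb1K : b1 ≤ 2^K := by
    apply Nat.ceil_le.mpr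
    have hxx : x * 2^K ≤ 2^K := by
      have := mul_le_mul_of_nonneg_right hx1 h2K0.le
      simpa using this
    push_cast
    linarith
  have hb1b2 : b1 ≤ b2 := by
    apply le_min ?_ hb1K
    calc b1 ≤ ⌈(x + (r:ℝ)/n) * 2^K⌉₊ := Nat.ceil_le_ceil (by nlinarith [mul_nonneg hrn0 h2K0.le])
    _ ≤ fl + 1 := Nat.ceil_le_floor_add_one _
  -- set equality
  have hsetEq : {m : ℕ | 1 ≤ m ∧ m ≤ n ∧ x ≤ vdc m ∧ vdc m ≤ x + (r:ℝ)/n}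
      = ↑((Finset.Icc 1 n).filter (fun m => b1 ≤ rev K m ∧ rev K m < b2)) := by
    ext m
    simp only [Set.mem_setOf_eq, Finset.coe_filter, Finset.mem_Icc]
    constructor
    · rintro ⟨hm1, hm2, hv1, hv2⟩
      have hmK : m < 2^K := lt_of_le_of_lt hm2 hnK
      have hv : vdc m = (rev K m : ℝ)/2^K := vdc_eq_rev hmK
      have hrevlt : rev K m < 2^K := rev_lt K m
      refine ⟨⟨hm1, hm2⟩, ?_, ?_⟩
      · apply Nat.ceil_le.mpr
        rw [hv] at hv1
        exact (le_div_iff₀ h2K0).mp hv1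
      · have hle : (rev K m : ℝ) ≤ (x + (r:ℝ)/n) * 2^K := by
          rw [hv, div_le_iff₀ h2K0] at hv2
          exact hv2
        have hfl2 : rev K m ≤ fl := Nat.le_floor hle
        omega
    · rintro ⟨⟨hm1, hm2⟩, hc1, hc2⟩
      have hmK : m < 2^K := lt_of_le_of_lt hm2 hnK
      have hv : vdc m = (rev K m : ℝ)/2^K := vdc_eq_rev hmK
      refine ⟨hm1, hm2, ?_, ?_⟩
      · rw [hv, le_div_iff₀ h2K0]
        have : (b1:ℝ) ≤ rev K m := by exact_mod_cast hc1
        linarith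
      · rw [hv, div_le_iff₀ h2K0]
        have hfl2 : rev K m ≤ fl := by omega
        have : (rev K m : ℝ) ≤ fl := by exact_mod_cast hfl2
        linarith
  have hcard : ({m : ℕ | 1 ≤ m ∧ m ≤ n ∧ x ≤ vdc m ∧ vdc m ≤ x + (r:ℝ)/n}.ncard : ℝ)
      = (Cnt (rev K) n b1 b2 : ℝ) := by
    rw [hsetEq, Set.ncard_coe_finset]
    rfl
  rw [hcard]
  -- alignment
  set t := 2^L * (b1 / 2^L) with htdef
  have htd : (2:ℕ)^L ∣ t := Dvd.intro _ rfl
  have htb1 : t ≤ b1 := by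
    rw [htdef, Nat.mul_comm]
    exact Nat.div_mul_le_self _ _
  have hb1t : b1 - t < 2^L := by
    have h1 := Nat.div_add_mod b1 (2^L)
    have h2 : b1 % 2^L < 2^L := Nat.mod_lt _ (by positivity)
    omega
  have hd2 : b2 - b1 ≤ 2^L := by
    have hdr : (b2:ℝ) - b1 < (r:ℝ)*2^K/n + 2 := by
      have e' : (x + (r:ℝ)/n)*2^K = x*2^K + (r:ℝ)*2^K/n := by ring
      linarith [hb2up, hb1le]
    have h2r : (r:ℝ)*2^K/n ≤ 2*r := by
      rw [div_le_iff₀ hn0]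
      have h3 : ((2:ℝ))^K ≤ 2*n := by exact_mod_cast h2K
      have h4 : (r:ℝ) * 2^K ≤ (r:ℝ) * (2*n) := mul_le_mul_of_nonneg_left h3 hr0.le
      linarith
    have hnat : b2 ≤ b1 + (2*r + 1) := by
      by_contra hcon
      push_neg at hcon
      have : (b1:ℝ) + (2*(r:ℝ)+2) ≤ b2 := by
        have : b1 + (2*r+2) ≤ b2 := by omega
        exact_mod_cast this
      linarith
    have hpowL : 2*r + 1 ≤ 2^L := by
      have h1 : r < 2^(Nat.log 2 r + 1) := Nat.lt_pow_succ_log_self (by norm_num) r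
      have h2 : (2:ℕ)^(Nat.log 2 r + 1) = 2 * 2^(Nat.log 2 r) := by rw [pow_succ]; ring
      have h3 : (2:ℕ)^L = 8 * 2^(Nat.log 2 r) := by
        rw [hL, pow_add]
        ring
      omega
    omega
  have ha2 : b2 - t ≤ 2^(L+1) := by
    have hp : (2:ℕ)^(L+1) = 2*2^L := by rw [pow_succ]; ring
    omega
  have hG1 := main_count n K L t (b1 - t) hLK htd (by omega) (by omega)
  have hG2 := main_count n K L t (b2 - t) hLK htd (by omega) (by omega)
  have e1 : t + (b1 - t) = b1 := by omega
  have e2 : t + (b2 - t) = b2 := by omega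
  rw [e1] at hG1
  rw [e2] at hG2
  have hcast1 : ((b1 - t : ℕ):ℝ) = (b1:ℝ) - t := by
    have : (((b1 - t : ℕ)):ℝ) = ((b1:ℕ):ℝ) - ((t:ℕ):ℝ) := Nat.cast_sub htb1
    exact_mod_cast this
  have hcast2 : ((b2 - t : ℕ):ℝ) = (b2:ℝ) - t := by
    have : (((b2 - t : ℕ)):ℝ) = ((b2:ℕ):ℝ) - ((t:ℕ):ℝ) := Nat.cast_sub (le_trans htb1 hb1b2)
    exact_mod_cast this
  rw [hcast1] at hG1
  rw [hcast2] at hG2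
  have hsum := cnt_add (rev K) n htb1 hb1b2
  have hstep1 : |(Cnt (rev K) n b1 b2 : ℝ) - n*((b2:ℝ)-b1)/2^K| ≤ 2*(L:ℝ) + 4 := by
    have hC : (Cnt (rev K) n b1 b2 : ℝ) = (Cnt (rev K) n t b2 : ℝ) - Cnt (rev K) n t b1 := by
      rw [hsum]
      push_cast
      ring
    rw [hC]
    have e : (n:ℝ)*((b2:ℝ)-b1)/2^K = n*((b2:ℝ)-t)/2^K - n*((b1:ℝ)-t)/2^K := by ring
    rw [e, abs_le] at *
    constructor <;> linarith [hG1.1, hG1.2, hG2.1, hG2.2]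
  have hstep2 : |(n:ℝ)*((b2:ℝ)-b1)/2^K - r| ≤ 2 := by
    have hbd : |((b2:ℝ)-b1) - (r:ℝ)*2^K/n| ≤ 2 := by
      have e' : (x + (r:ℝ)/n)*2^K = x*2^K + (r:ℝ)*2^K/n := by ring
      rw [abs_le]
      constructor <;> linarith [hb2lo, hb1lt, hb2up, hb1le]
    have e2' : (n:ℝ)*((b2:ℝ)-b1)/2^K - r = (n/2^K) * (((b2:ℝ)-b1) - (r:ℝ)*2^K/n) := by
      field_simp
    rw [e2', abs_mul]
    have h01 : |(n:ℝ)/2^K| ≤ 1 := by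
      rw [abs_of_nonneg (by positivity), div_le_one h2K0]
      exact_mod_cast le_of_lt hnK
    calc |(n:ℝ)/2^K| * |((b2:ℝ)-b1) - (r:ℝ)*2^K/n| ≤ 1 * 2 := by
          apply mul_le_mul h01 hbd (abs_nonneg _) (by norm_num)
    _ = 2 := by norm_num
  have htotal : |(Cnt (rev K) n b1 b2 : ℝ) - r| ≤ 2*(L:ℝ) + 6 := by
    rw [abs_le] at *
    constructor <;> linarith [hstep1.1, hstep1.2, hstep2.1, hstep2.2]
  have hlog1 : (Nat.log 2 r : ℝ) * Real.log 2 ≤ Real.log r := by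
    have h1 : ((2:ℝ))^(Nat.log 2 r) ≤ r := by
      exact_mod_cast Nat.pow_log_le_self 2 (show r ≠ 0 by omega)
    calc (Nat.log 2 r : ℝ) * Real.log 2 = Real.log ((2:ℝ)^(Nat.log 2 r)) := by
          rw [Real.log_pow]
    _ ≤ Real.log r := Real.log_le_log (by positivity) h1
  have hlog2 : Real.log 2 ≤ Real.log r := Real.log_le_log (by norm_num) (by exact_mod_cast hr)
  have hl2 : (0.6931471803:ℝ) < Real.log 2 := Real.log_two_gt_d9
  have hLcast : (L:ℝ) = (Nat.log 2 r : ℝ) + 3 := by rw [hL]; push_cast; ring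
  have hlognn : (0:ℝ) ≤ (Nat.log 2 r : ℝ) := Nat.cast_nonneg _
  calc |(Cnt (rev K) n b1 b2 : ℝ) - r| ≤ 2*(L:ℝ) + 6 := htotal
  _ = 2*(Nat.log 2 r : ℝ) + 12 := by rw [hLcast]; ring
  _ ≤ 30 * Real.log r := by nlinarith [hlog1, hlog2, hl2, hlognn]
end

section
/- There exists a constant c > 0 such that: for all integers r ≥ 2 there exists N such that for all n ≥ N and all x ∈ [0,1], the number of m with 1 ≤ m ≤ n such that {mφ} lies in the cyclic interval [x, x + r/n] (mod 1) differs from r by at most c·log(r), where φ = (1+√5)/2. -/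
open Finset
open scoped Classical
open Real


noncomputable def myCnt (L : ℝ) (a n : ℕ) (x : ℝ) : ℕ :=
  ((Finset.Ico a (a + n)).filter (fun m : ℕ => Int.fract ((m : ℝ) * goldenRatio - x) ≤ L)).card

lemma psi_abs_lt_one : |goldenConj| < 1 := by
  rw [abs_lt]; exact ⟨neg_one_lt_goldenConj, by linarith [goldenConj_neg]⟩

lemma fib_mul_psi_pow_le (k : ℕ) : (Nat.fib k : ℝ) * |goldenConj| ^ k ≤ 1 := by
  have h1 : |goldenConj| = -goldenConj := abs_of_neg goldenConj_neg
  have hfib := Real.coe_fib_eq k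
  have h2 : goldenRatio ^ k * (-goldenConj) ^ k = 1 := by
    rw [← mul_pow, show goldenRatio * -goldenConj = 1 by nlinarith [goldenRatio_mul_goldenConj], one_pow]
  have h3 : -1 ≤ goldenConj ^ k * (-goldenConj) ^ k := by
    have : |goldenConj ^ k * (-goldenConj) ^ k| ≤ 1 := by
      rw [← mul_pow, abs_pow]
      apply pow_le_one₀ (abs_nonneg _)
      rw [abs_mul, abs_neg]
      nlinarith [psi_abs_lt_one, abs_nonneg goldenConj]
    linarith [abs_le.mp this |>.1]
  have h5 : (2:ℝ) ≤ Real.sqrt 5 := by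
    nlinarith [Real.sq_sqrt (by norm_num : (0:ℝ) ≤ 5), Real.sqrt_nonneg 5]
  rw [hfib, h1, div_mul_eq_mul_div, sub_mul, h2]
  rw [div_le_one (by linarith)]
  linarith

lemma blockU (k : ℕ) (hk : 1 ≤ k) (L y : ℝ) (hL0 : 0 ≤ L) :
    ((myCnt L 0 (Nat.fib k) y : ℝ)) ≤ (Nat.fib k : ℝ) * L + 4 := by
  set F := Nat.fib k with hFdef
  have hFpos : 0 < F := Nat.fib_pos.mpr hk
  have hFR : (0:ℝ) < (F:ℝ) := by exact_mod_cast hFpos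
  set β : ℝ := (F:ℝ) * y with hβ
  have hgold : (F:ℝ) * goldenRatio = (Nat.fib (k+1) : ℝ) - goldenConj ^ k := by
    have := fib_succ_sub_goldenRatio_mul_fib k
    rw [← hFdef] at this
    linarith
  set f : ℕ → ℤ := fun m =>
    (m : ℤ) * (Nat.fib (k+1) : ℤ) - ⌊(m:ℝ) * goldenRatio - y⌋ * (F:ℤ) - ⌈β⌉ + 1 with hf
  have hmem : ∀ m ∈ (Finset.Ico 0 (0 + F)).filter
      (fun m : ℕ => Int.fract ((m : ℝ) * goldenRatio - y) ≤ L),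
      f m ∈ Finset.Icc (-1 : ℤ) (⌊(F:ℝ)*L⌋ + 2) := by
    intro m hm
    rw [Finset.mem_filter, Finset.mem_Ico] at hm
    obtain ⟨⟨_, hmF⟩, hfr⟩ := hm
    set v : ℝ := (m:ℝ) * goldenRatio - y with hv
    have hea : |(m:ℝ) * goldenConj ^ k| ≤ 1 := by
      rw [abs_mul, abs_pow]
      calc |(m:ℝ)| * |goldenConj|^k ≤ (F:ℝ) * |goldenConj|^k := by
            apply mul_le_mul_of_nonneg_right _ (by positivity)
            rw [abs_of_nonneg (by positivity)]
            have : m ≤ F := by omega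
            exact_mod_cast this
        _ ≤ 1 := fib_mul_psi_pow_le k
    have h1 : (F:ℝ) * v = (m:ℝ)*(Nat.fib (k+1):ℝ) - (m:ℝ)*goldenConj^k - β := by
      rw [hv, hβ]; linear_combination (m:ℝ) * hgold
    have hkey : ((f m : ℝ)) = (F:ℝ)*Int.fract v + (m:ℝ)*goldenConj^k + (β - ⌈β⌉) + 1 := by
      rw [hf]
      simp only [Int.cast_add, Int.cast_sub, Int.cast_mul, Int.cast_natCast, Int.cast_one]
      rw [Int.fract]
      linear_combination -h1
    have hfr0 := Int.fract_nonneg v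
    have hceil1 := Int.le_ceil β
    have hceil2 := Int.ceil_lt_add_one β
    have habs := abs_le.mp hea
    have c1 : ((-1 : ℤ) : ℝ) ≤ (f m : ℝ) := by
      push_cast
      rw [hkey]
      nlinarith [mul_nonneg hFR.le hfr0]
    have c2 : ((f m : ℝ)) ≤ (F:ℝ)*L + 2 := by
      rw [hkey]
      nlinarith [mul_le_mul_of_nonneg_left hfr hFR.le]
    rw [Finset.mem_Icc]
    constructor
    · exact_mod_cast c1
    · have : f m - 2 ≤ ⌊(F:ℝ)*L⌋ := Int.le_floor.mpr (by push_cast; linarith)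
      omega
  have hinj : Set.InjOn f ((Finset.Ico 0 (0 + F)).filter
      (fun m : ℕ => Int.fract ((m : ℝ) * goldenRatio - y) ≤ L)) := by
    intro m1 h1 m2 h2 heq
    simp only [Finset.coe_filter, Set.mem_setOf_eq, Finset.mem_Ico] at h1 h2
    rw [hf] at heq
    simp only at heq
    have hco : IsCoprime ((F:ℤ)) ((Nat.fib (k+1) : ℤ)) := by
      rw [Int.isCoprime_iff_gcd_eq_one, Int.gcd_natCast_natCast]
      exact Nat.fib_coprime_fib_succ k
    have hdvd : (F:ℤ) ∣ (Nat.fib (k+1) : ℤ) * ((m1:ℤ) - m2) := by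
      refine ⟨⌊(m1:ℝ) * goldenRatio - y⌋ - ⌊(m2:ℝ) * goldenRatio - y⌋, ?_⟩
      linear_combination heq
    have hdvd2 := hco.dvd_of_dvd_mul_left hdvd
    have : ((m1:ℤ) - m2) = 0 := by
      apply Int.eq_zero_of_abs_lt_dvd hdvd2
      have e1 : m1 < 0 + F := h1.1.2
      have e2 : m2 < 0 + F := h2.1.2
      rw [abs_lt]
      omega
    omega
  have hcard := Finset.card_le_card_of_injOn f hmem hinj
  have hicc : (Finset.Icc (-1 : ℤ) (⌊(F:ℝ)*L⌋ + 2)).card = (⌊(F:ℝ)*L⌋ + 4).toNat := by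
    rw [Int.card_Icc]
    congr 1
    ring
  have hfl0 : 0 ≤ ⌊(F:ℝ)*L⌋ := Int.floor_nonneg.mpr (by positivity)
  have : (myCnt L 0 F y : ℝ) ≤ ((⌊(F:ℝ)*L⌋ + 4).toNat : ℝ) := by
    unfold myCnt
    exact_mod_cast hicc ▸ hcard
  calc (myCnt L 0 F y : ℝ) ≤ ((⌊(F:ℝ)*L⌋ + 4).toNat : ℝ) := this
    _ = ((⌊(F:ℝ)*L⌋ : ℝ) + 4) := by
        have h4 : ((⌊(F:ℝ)*L⌋ + 4).toNat : ℤ) = ⌊(F:ℝ)*L⌋ + 4 := Int.toNat_of_nonneg (by omega)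
        exact_mod_cast congrArg (Int.cast : ℤ → ℝ) h4
    _ ≤ (F:ℝ)*L + 4 := by linarith [Int.floor_le ((F:ℝ)*L)]

lemma myCnt_shift (L : ℝ) (a n : ℕ) (x : ℝ) :
    myCnt L a n x = myCnt L 0 n (x - a * goldenRatio) := by
  unfold myCnt
  rw [Finset.card_bij (fun m _ => m - a)]
  · intro m hm
    simp only [Finset.mem_filter, Finset.mem_Ico] at hm ⊢
    obtain ⟨⟨h1, h2⟩, h3⟩ := hm
    refine ⟨⟨Nat.zero_le _, by omega⟩, ?_⟩
    have : ((m - a : ℕ) : ℝ) * goldenRatio - (x - a * goldenRatio)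
        = (m : ℝ) * goldenRatio - x := by
      have : ((m - a : ℕ) : ℝ) = (m : ℝ) - a := by
        push_cast [Nat.cast_sub h1]; ring
      rw [this]; ring
    rw [this]; exact h3
  · intro m hm m' hm' h
    simp only [Finset.mem_filter, Finset.mem_Ico] at hm hm'
    omega
  · intro m hm
    simp only [Finset.mem_filter, Finset.mem_Ico] at hm ⊢
    refine ⟨a + m, ⟨⟨by omega, by omega⟩, ?_⟩, by omega⟩
    have : ((a + m : ℕ) : ℝ) * goldenRatio - x
        = (m : ℝ) * goldenRatio - (x - a * goldenRatio) := by push_cast; ring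
    rw [this]; exact hm.2

lemma myCnt_split (L : ℝ) (a p q : ℕ) (x : ℝ) :
    myCnt L a (p + q) x = myCnt L a p x + myCnt L (a + p) q x := by
  unfold myCnt
  rw [← Finset.card_union_of_disjoint, ← Finset.filter_union]
  · congr 1
    congr 1
    rw [Finset.Ico_union_Ico_eq_Ico (by omega) (by omega)]
    congr 1; omega
  · refine Finset.disjoint_filter_filter ?_
    simp only [Finset.disjoint_left, Finset.mem_Ico]
    intro m h1 h2; omega

lemma myCnt_mono (L : ℝ) (a : ℕ) {n n' : ℕ} (h : n ≤ n') (x : ℝ) :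
    myCnt L a n x ≤ myCnt L a n' x := by
  unfold myCnt
  apply Finset.card_le_card
  apply Finset.filter_subset_filter
  exact Finset.Ico_subset_Ico le_rfl (by omega)


lemma blockD (k : ℕ) (hk : 1 ≤ k) (L y : ℝ) (hL0 : 0 ≤ L) (hL1 : L ≤ 1) :
    (Nat.fib k : ℝ) * L - 4 ≤ ((myCnt L 0 (Nat.fib k) y : ℝ)) := by
  set F := Nat.fib k with hFdef
  have hFpos : 0 < F := Nat.fib_pos.mpr hk
  have hsplit : myCnt L 0 F y + ((Finset.Ico 0 (0+F)).filter
      (fun m : ℕ => ¬ Int.fract ((m:ℝ) * goldenRatio - y) ≤ L)).card = F := by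
    unfold myCnt
    rw [Finset.card_filter_add_card_filter_not]
    simp
  have hsub : ((Finset.Ico 0 (0+F)).filter
      (fun m : ℕ => ¬ Int.fract ((m:ℝ) * goldenRatio - y) ≤ L)).card
      ≤ myCnt (1 - L) 0 F (y + L) := by
    unfold myCnt
    apply Finset.card_le_card
    intro m hm
    rw [Finset.mem_filter] at hm ⊢
    refine ⟨hm.1, ?_⟩
    have hgt : L < Int.fract ((m:ℝ) * goldenRatio - y) := lt_of_not_ge hm.2
    have hlt1 := Int.fract_lt_one ((m:ℝ) * goldenRatio - y)
    have heq : (m:ℝ) * goldenRatio - (y + L)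
        = (⌊(m:ℝ) * goldenRatio - y⌋ : ℝ) + (Int.fract ((m:ℝ) * goldenRatio - y) - L) := by
      rw [Int.fract]; ring
    rw [heq, Int.fract_intCast_add, Int.fract_eq_self.mpr ⟨by linarith, by linarith⟩]
    linarith
  have hub := blockU k hk (1 - L) (y + L) (by linarith)
  rw [← hFdef] at hub
  have h1 : (myCnt L 0 F y : ℝ) + (((Finset.Ico 0 (0+F)).filter
      (fun m : ℕ => ¬ Int.fract ((m:ℝ) * goldenRatio - y) ≤ L)).card : ℝ) = F := by
    exact_mod_cast congrArg (Nat.cast : ℕ → ℝ) hsplit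
  have h2 : (((Finset.Ico 0 (0+F)).filter
      (fun m : ℕ => ¬ Int.fract ((m:ℝ) * goldenRatio - y) ≤ L)).card : ℝ)
      ≤ (myCnt (1-L) 0 F (y+L) : ℝ) := by exact_mod_cast hsub
  nlinarith

lemma fib_big (n : ℕ) : n + 1 ≤ Nat.fib (n + 3) := by
  induction n with
  | zero => simp [Nat.fib]
  | succ n ih =>
    have h2 : 1 ≤ Nat.fib (n + 2) := Nat.fib_pos.mpr (by omega)
    have h4 : Nat.fib (n + 1 + 3) = Nat.fib (n + 2) + Nat.fib (n + 3) := by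
      rw [show n + 1 + 3 = (n + 2) + 2 by ring, Nat.fib_add_two]
    omega

lemma exists_fib_between {n : ℕ} (hn : 1 ≤ n) :
    ∃ k, 1 ≤ k ∧ Nat.fib k ≤ n ∧ n < Nat.fib (k + 1) ∧ n ≤ 2 * Nat.fib k := by
  classical
  set P : ℕ → Prop := fun k => Nat.fib k ≤ n with hP
  set k := Nat.findGreatest P (n + 2) with hk
  have hk1 : 1 ≤ k := Nat.le_findGreatest (by omega) (show Nat.fib 1 ≤ n by simpa using hn)
  have hfk : Nat.fib k ≤ n :=
    Nat.findGreatest_spec (P := P) (show 1 ≤ n + 2 by omega) (show Nat.fib 1 ≤ n by simpa using hn)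
  have hlt : n < Nat.fib (k + 1) := by
    by_cases hcase : k + 1 ≤ n + 2
    · have := Nat.findGreatest_is_greatest (show k < k + 1 by omega) hcase
      simp [hP] at this
      omega
    · have hkn : k = n + 2 := by
        have := Nat.findGreatest_le (P := P) (n + 2)
        omega
      have := fib_big n
      have hmono : Nat.fib (n + 3) ≤ Nat.fib (k + 1) := Nat.fib_mono (by omega)
      omega
  have h2 : Nat.fib (k + 1) ≤ 2 * Nat.fib k := by
    obtain ⟨j, hj⟩ : ∃ j, k = j + 1 := ⟨k - 1, by omega⟩
    rw [hj, show j + 1 + 1 = j + 2 by ring, Nat.fib_add_two]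
    have := Nat.fib_mono (show j ≤ j + 1 by omega)
    omega
  exact ⟨k, hk1, hfk, hlt, by omega⟩

lemma blockBoth (L : ℝ) (hL0 : 0 ≤ L) (hL1 : L ≤ 1) (k : ℕ) (hk : 1 ≤ k) (a : ℕ) (x : ℝ) :
    |(myCnt L a (Nat.fib k) x : ℝ) - (Nat.fib k : ℝ) * L| ≤ 4 := by
  rw [myCnt_shift]
  rw [abs_le]
  constructor
  · linarith [blockD k hk L (x - a * goldenRatio) hL0 hL1]
  · linarith [blockU k hk L (x - a * goldenRatio) hL0]

lemma main_induction (L : ℝ) (hL0 : 0 ≤ L) (hL1 : L ≤ 1) (M : ℝ) (hM : 1 ≤ M)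
    (hML : M * L ≤ 1) :
    ∀ j : ℕ, ∀ n a : ℕ, ∀ x : ℝ, (n : ℝ) ≤ 2 ^ j * M →
      |((myCnt L a n x : ℝ)) - n * L| ≤ 4 * j + 7 := by
  intro j
  induction j with
  | zero =>
    intro n a x hn
    rcases Nat.eq_zero_or_pos n with rfl | hn1
    · simp [myCnt]
    · obtain ⟨k, hk1, hfk, hlt, h2f⟩ := exists_fib_between hn1
      have hmono : (myCnt L a n x : ℝ) ≤ (myCnt L a (Nat.fib (k+1)) x : ℝ) := by
        exact_mod_cast myCnt_mono L a hlt.le x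
      have hub : (myCnt L a (Nat.fib (k+1)) x : ℝ) ≤ (Nat.fib (k+1) : ℝ) * L + 4 := by
        rw [myCnt_shift]
        exact blockU (k+1) (by omega) L _ hL0
      have hfib2 : (Nat.fib (k+1) : ℝ) ≤ 2 * n := by
        have : Nat.fib (k+1) ≤ 2 * n := by
          have h3 : Nat.fib (k+1) ≤ 2 * Nat.fib k := by
            obtain ⟨j, hj⟩ : ∃ j, k = j + 1 := ⟨k - 1, by omega⟩
            rw [hj, show j + 1 + 1 = j + 2 by ring, Nat.fib_add_two]
            have := Nat.fib_mono (show j ≤ j + 1 by omega)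
            omega
          omega
        exact_mod_cast this
      have hnL : (n : ℝ) * L ≤ 1 := by
        calc (n:ℝ) * L ≤ M * L := by apply mul_le_mul_of_nonneg_right _ hL0; simp at hn; linarith
          _ ≤ 1 := hML
      have hc0 : (0:ℝ) ≤ (myCnt L a n x : ℝ) := by positivity
      rw [abs_le]
      constructor
      · simp only [Nat.cast_zero]; nlinarith
      · have : (myCnt L a n x : ℝ) ≤ 2 * ((n:ℝ) * L) + 4 := by nlinarith
        simp only [Nat.cast_zero]; nlinarith
  | succ j ih =>
    intro n a x hn
    by_cases hsmall : (n : ℝ) ≤ 2 ^ j * M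
    · have := ih n a x hsmall
      have hj : (4:ℝ) * j + 7 ≤ 4 * (j+1) + 7 := by push_cast; linarith
      calc |((myCnt L a n x : ℝ)) - n * L| ≤ 4 * j + 7 := this
        _ ≤ 4 * ((j:ℕ)+1 : ℕ) + 7 := by push_cast; linarith
    · push_neg at hsmall
      have hMpow : (1:ℝ) ≤ 2 ^ j * M := by
        have : (1:ℝ) ≤ 2^j := one_le_pow₀ (by norm_num : (1:ℝ) ≤ 2)
        nlinarith
      have hn1 : 1 ≤ n := by
        by_contra h
        push_neg at h
        interval_cases n
        simp at hsmall
        linarith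
      obtain ⟨k, hk1, hfk, hlt, h2f⟩ := exists_fib_between hn1
      have hsplit : myCnt L a n x = myCnt L a (Nat.fib k) x + myCnt L (a + Nat.fib k) (n - Nat.fib k) x := by
        have h := myCnt_split L a (Nat.fib k) (n - Nat.fib k) x
        rw [show Nat.fib k + (n - Nat.fib k) = n by omega] at h
        exact h
      have hrest : ((n - Nat.fib k : ℕ) : ℝ) ≤ 2 ^ j * M := by
        have h1 : ((n - Nat.fib k : ℕ) : ℝ) = (n:ℝ) - Nat.fib k := by
          push_cast [Nat.cast_sub hfk]; ring
        have h2 : (n:ℝ) - Nat.fib k ≤ (n:ℝ) / 2 := by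
          have : (n:ℝ) ≤ 2 * (Nat.fib k : ℝ) := by exact_mod_cast h2f
          linarith
        have h3 : (n:ℝ) ≤ 2 ^ (j+1) * M := hn
        rw [h1]
        have : (2:ℝ) ^ (j+1) = 2 * 2 ^ j := by ring
        nlinarith
      have hIH := ih (n - Nat.fib k) (a + Nat.fib k) x hrest
      have hblk := blockBoth L hL0 hL1 k hk1 a x
      have hcast : ((n - Nat.fib k : ℕ) : ℝ) = (n:ℝ) - Nat.fib k := by
        push_cast [Nat.cast_sub hfk]; ring
      rw [hsplit]
      push_cast
      have expand : ((myCnt L a (Nat.fib k) x : ℝ) + (myCnt L (a + Nat.fib k) (n - Nat.fib k) x : ℝ)) - (n:ℝ) * L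
          = ((myCnt L a (Nat.fib k) x : ℝ) - (Nat.fib k : ℝ) * L)
            + ((myCnt L (a + Nat.fib k) (n - Nat.fib k) x : ℝ) - ((n - Nat.fib k : ℕ) : ℝ) * L) := by
        rw [hcast]; ring
      rw [expand]
      calc _ ≤ |(myCnt L a (Nat.fib k) x : ℝ) - (Nat.fib k : ℝ) * L|
            + |(myCnt L (a + Nat.fib k) (n - Nat.fib k) x : ℝ) - ((n - Nat.fib k : ℕ) : ℝ) * L| := abs_add_le _ _
        _ ≤ 4 + (4 * j + 7) := by linarith
        _ ≤ 4 * (j + 1) + 7 := by linarith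

theorem stmt_15 :
    ∃ c : ℝ, 0 < c ∧ ∀ r : ℕ, 2 ≤ r → ∃ N : ℕ, ∀ n : ℕ, N ≤ n →
      ∀ x : ℝ, 0 ≤ x → x ≤ 1 →
        |(({m : ℕ | 1 ≤ m ∧ m ≤ n ∧
              Int.fract ((m : ℝ) * ((1 + Real.sqrt 5) / 2) - x) ≤ (r : ℝ) / n}.ncard
            : ℝ)) - (r : ℝ)| ≤ c * Real.log r := by
  refine ⟨100, by norm_num, ?_⟩
  intro r hr
  refine ⟨2 * r, ?_⟩
  intro n hn x _ _
  have hr0 : 0 < r := by omega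
  have hn0 : 0 < n := by omega
  have hnR : (0:ℝ) < n := by exact_mod_cast hn0
  have hrR : (0:ℝ) < r := by exact_mod_cast hr0
  have hrn : (r:ℝ) ≤ n := by exact_mod_cast (by omega : r ≤ n)
  set L : ℝ := (r:ℝ) / n with hL
  have hL0 : 0 ≤ L := by positivity
  have hL1 : L ≤ 1 := by rw [hL, div_le_one hnR]; exact hrn
  set M : ℝ := (n:ℝ) / (2 * r) with hM
  have hM1 : 1 ≤ M := by
    rw [hM, le_div_iff₀ (by positivity)]
    have h : ((2 * r : ℕ) : ℝ) ≤ (n:ℝ) := by exact_mod_cast hn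
    push_cast at h
    linarith
  have hML : M * L ≤ 1 := by
    rw [hM, hL]
    rw [div_mul_div_comm]
    rw [div_le_one (by positivity)]
    nlinarith
  set j : ℕ := Nat.log 2 r + 2 with hj
  have hpow : (n:ℝ) ≤ 2 ^ j * M := by
    have h1 : r < 2 ^ (Nat.log 2 r + 1) := Nat.lt_pow_succ_log_self (by norm_num) r
    have h2 : 2 * r ≤ 2 ^ j := by
      rw [hj, pow_succ]
      have : 2 ^ (Nat.log 2 r + 1) ≥ r + 1 := h1
      omega
    have h2R : (2:ℝ) * r ≤ 2 ^ j := by exact_mod_cast h2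
    rw [hM]
    calc (n:ℝ) = (n:ℝ) * (2 * r) / (2 * r) := by field_simp
      _ ≤ (n:ℝ) * 2 ^ j / (2 * r) := by
          gcongr
      _ = 2 ^ j * ((n:ℝ) / (2 * r)) := by ring
  have hmain := main_induction L hL0 hL1 M hM1 hML j n 1 x hpow
  have hset : {m : ℕ | 1 ≤ m ∧ m ≤ n ∧
        Int.fract ((m : ℝ) * ((1 + Real.sqrt 5) / 2) - x) ≤ (r : ℝ) / n}.ncard
      = myCnt L 1 n x := by
    have hgold : goldenRatio = (1 + Real.sqrt 5) / 2 := rfl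
    have hsetEq : {m : ℕ | 1 ≤ m ∧ m ≤ n ∧
          Int.fract ((m : ℝ) * ((1 + Real.sqrt 5) / 2) - x) ≤ (r : ℝ) / n}
        = ↑((Finset.Ico 1 (1 + n)).filter
            (fun m : ℕ => Int.fract ((m : ℝ) * goldenRatio - x) ≤ L)) := by
      ext m
      simp only [Set.mem_setOf_eq, Finset.coe_filter, Finset.mem_Ico, hgold, hL]
      constructor
      · rintro ⟨h1, h2, h3⟩; exact ⟨⟨h1, by omega⟩, h3⟩
      · rintro ⟨⟨h1, h2⟩, h3⟩; exact ⟨h1, by omega, h3⟩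
    rw [hsetEq, Set.ncard_coe_finset]
    rfl
  rw [hset]
  have hnL : (n:ℝ) * L = r := by
    rw [hL]; field_simp
  rw [hnL] at hmain
  -- now |cnt - r| ≤ 4*j + 7 = 4*Nat.log 2 r + 15
  have hjR : (4:ℝ) * j + 7 = 4 * (Nat.log 2 r : ℝ) + 15 := by
    rw [hj]; push_cast; ring
  rw [hjR] at hmain
  -- log bounds
  have hlog2 : (0.6:ℝ) ≤ Real.log 2 := by
    have := Real.log_two_gt_d9
    linarith
  have hlogr2 : Real.log 2 ≤ Real.log r := by
    apply Real.log_le_log (by norm_num)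
    exact_mod_cast hr
  have hpowlog : (Nat.log 2 r : ℝ) * Real.log 2 ≤ Real.log r := by
    have h1 : (2:ℕ) ^ (Nat.log 2 r) ≤ r := Nat.pow_log_le_self 2 (by omega)
    have h1R : (2:ℝ) ^ (Nat.log 2 r) ≤ r := by exact_mod_cast h1
    calc (Nat.log 2 r : ℝ) * Real.log 2 = Real.log ((2:ℝ) ^ (Nat.log 2 r)) := by
          rw [Real.log_pow]
      _ ≤ Real.log r := Real.log_le_log (by positivity) h1R
  have hnat0 : (0:ℝ) ≤ (Nat.log 2 r : ℝ) := by positivity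
  have ht06 : (Nat.log 2 r : ℝ) * 0.6 ≤ Real.log r := by nlinarith
  have hr06 : (0.6:ℝ) ≤ Real.log r := by linarith
  calc |(myCnt L 1 n x : ℝ) - r| ≤ 4 * (Nat.log 2 r : ℝ) + 15 := hmain
    _ ≤ 100 * Real.log r := by linarith
end
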